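/- arXiv:2302.09798 — 6 statements merged into one kernel-verified Lean document; each statement's English description precedes it below -/
import Mathlib

section
/- Let n ≥ 4 and set P = 3⌈log₂ n⌉ + 12. Then there exist c ∈ Z_{1+P} and d ∈ Z_2 such that the code C(n;c,d) = { x ∈ R(n, 3, P/3) : Inv(x) ≡ c (mod 1+P) and wt_H(x) ≡ d (mod 2) } satisfies |C(n;c,d)| ≥ 2^{n−1} / (2(1+P)). -/
open List

/-- The `t`-insertion ball of a binary word `x`: all words of length `|x| + t`
containing `x` as a (not necessarily contiguous) subsequence. -/
def insBall (t : ℕ) (x : List Bool) : Set (List Bool) :=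
  {z | z.length = x.length + t ∧ x.Sublist z}

/-- Componentwise complement of a binary word. -/
def bcompl (w : List Bool) : List Bool := w.map (fun c => !c)

/-- `wpow p i` is the concatenation of `i` copies of the word `p`. -/
def wpow (p : List Bool) (i : ℕ) : List Bool := (List.replicate i p).flatten

/-- `w` is an alternating word of length at least 1:
`w = (a ā)^i` with `i ≥ 1`, or `w = (a ā)^j a` with `j ≥ 0`. -/
def IsAlt (w : List Bool) : Prop :=
  ∃ a : Bool, (∃ i, 1 ≤ i ∧ w = wpow [a, !a] i) ∨ (∃ j, w = wpow [a, !a] j ++ [a])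

/-- Type-A confusability: `x = u w v`, `y = u w̄ v` for an alternating block `w`. -/
def TypeA (x y : List Bool) : Prop :=
  ∃ u v w : List Bool, IsAlt w ∧ x = u ++ w ++ v ∧ y = u ++ bcompl w ++ v

/-- Type-B confusability: `{x, y} = {u a ā v b w, u ā v b b̄ w}`. -/
def TypeB (x y : List Bool) : Prop :=
  ∃ (u v w : List Bool) (a b : Bool),
    ({x, y} : Set (List Bool)) =
      {u ++ [a, !a] ++ v ++ [b] ++ w, u ++ [!a] ++ v ++ [b, !b] ++ w}

/-- `p` is a period of `s` : `s_i = s_{i+p}` whenever both indices are in range. -/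
def IsPeriodOf (p : ℕ) (s : List Bool) : Prop :=
  ∀ i, i + p < s.length → s.getD i false = s.getD (i + p) false

/-- The (smallest) period of `s` is at most `ℓ`. -/
def PeriodLe (s : List Bool) (ℓ : ℕ) : Prop :=
  ∃ p, 1 ≤ p ∧ p ≤ ℓ ∧ IsPeriodOf p s

/-- `R(n, ℓ, t)`: binary words of length `n` in which every contiguous subword
of period at most `ℓ` has length at most `t`. -/
def Rset (n ℓ t : ℕ) : Set (List Bool) :=
  {x | x.length = n ∧ ∀ s : List Bool, s <:+: x → PeriodLe s ℓ → s.length ≤ t}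

/-- `Inv(x)`: the number of pairs `i < j` with `x_i > x_j` (i.e. `x_i = 1`, `x_j = 0`). -/
def invNum (x : List Bool) : ℕ :=
  ((Finset.range x.length ×ˢ Finset.range x.length).filter
    (fun q => q.1 < q.2 ∧ x.getD q.1 false = true ∧ x.getD q.2 false = false)).card

/-! ### Auxiliary material -/

lemma period_mod {p : ℕ} (hp : 1 ≤ p) {s : List Bool} (h : IsPeriodOf p s) :
    ∀ i, i < s.length → s.getD i false = s.getD (i % p) false := by
  intro i
  induction i using Nat.strong_induction_on with
  | _ i ih =>
    intro hi
    rcases lt_or_ge i p with h1 | h1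
    · rw [Nat.mod_eq_of_lt h1]
    · have h2 := h (i - p) (by omega)
      rw [Nat.sub_add_cancel h1] at h2
      rw [← h2, ih (i - p) (by omega) (by omega), Nat.mod_eq_sub_mod h1]

lemma magic (p p' : ℕ) (hp : 1 ≤ p) (hp3 : p ≤ 3) (hp' : 1 ≤ p') (hp3' : p' ≤ 3)
    (a b c d : Bool)
    (H : ∀ i < 4, [a,b,c,d].getD i false = [a,b,c,d].getD (i % p) false)
    (H' : ∀ i < 4, [a,b,c,d].getD i false = [a,b,c,d].getD (i % p') false) :
    ∀ j < 6, [a,b,c,d].getD (j % p) false = [a,b,c,d].getD (j % p') false := by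
  interval_cases p <;> interval_cases p' <;> revert H H' <;> revert a b c d <;> decide

lemma getD_lt {s : List Bool} {i : ℕ} (h : i < s.length) : s.getD i false = s[i] :=
  List.getD_eq_getElem s false h

/-- A word of length ≥ 4 with period at most 3 is determined by its length and
its first four letters. -/
lemma det {L : ℕ} (hL : 4 ≤ L) {w w' : List Bool} (hw : w.length = L)
    (hw' : w'.length = L) (h : PeriodLe w 3) (h' : PeriodLe w' 3)
    (h4 : w.take 4 = w'.take 4) : w = w' := by
  obtain ⟨p, hp1, hp3, hp⟩ := h
  obtain ⟨p', hp1', hp3', hp'⟩ := h'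
  have hfirst : ∀ i, i < 4 → w.getD i false = w'.getD i false := by
    intro i hi
    have h1 : i < (w.take 4).length := by simp [hw]; omega
    have h2 : i < (w'.take 4).length := by simp [hw']; omega
    rw [getD_lt (by omega : i < w.length), getD_lt (by omega : i < w'.length),
      ← List.getElem_take (xs := w) (h := h1), ← List.getElem_take (xs := w') (h := h2)]
    congr 1
  set g : List Bool := [w.getD 0 false, w.getD 1 false, w.getD 2 false, w.getD 3 false]
    with hg
  have hgd : ∀ i, i < 4 → g.getD i false = w.getD i false := by
    intro i hi
    interval_cases i <;> rfl
  have hgd' : ∀ i, i < 4 → g.getD i false = w'.getD i false := fun i hi =>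
    (hgd i hi).trans (hfirst i hi)
  have hmodp : ∀ i : ℕ, i % p < 4 := fun i => by
    have := Nat.mod_lt i (show 0 < p by omega); omega
  have hmodp' : ∀ i : ℕ, i % p' < 4 := fun i => by
    have := Nat.mod_lt i (show 0 < p' by omega); omega
  have hH : ∀ i < 4, g.getD i false = g.getD (i % p) false := by
    intro i hi
    rw [hgd i hi, hgd (i % p) (hmodp i), period_mod hp1 hp i (by omega)]
  have hH' : ∀ i < 4, g.getD i false = g.getD (i % p') false := by
    intro i hi
    rw [hgd' i hi, hgd' (i % p') (hmodp' i), period_mod hp1' hp' i (by omega)]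
  have hdvd : p ∣ 6 := by interval_cases p <;> decide
  have hdvd' : p' ∣ 6 := by interval_cases p' <;> decide
  have key := magic p p' hp1 hp3 hp1' hp3' (w.getD 0 false) (w.getD 1 false)
    (w.getD 2 false) (w.getD 3 false) hH hH'
  apply List.ext_getElem (by omega)
  intro i hi1 hi2
  rw [← getD_lt hi1, ← getD_lt hi2]
  have e1 : w.getD i false = g.getD (i % p) false := by
    rw [period_mod hp1 hp i hi1, hgd (i % p) (hmodp i)]
  have e2 : w'.getD i false = g.getD (i % p') false := by
    rw [period_mod hp1' hp' i hi2, hgd' (i % p') (hmodp' i)]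
  rw [e1, e2]
  have := key (i % 6) (Nat.mod_lt i (by omega))
  rwa [Nat.mod_mod_of_dvd i hdvd, Nat.mod_mod_of_dvd i hdvd'] at this

noncomputable def allW (n : ℕ) : Finset (List Bool) :=
  (Finset.univ : Finset (List.Vector Bool n)).image List.Vector.toList

lemma mem_allW {n : ℕ} {x : List Bool} : x ∈ allW n ↔ x.length = n := by
  simp only [allW, Finset.mem_image, Finset.mem_univ, true_and]
  constructor
  · rintro ⟨⟨v, hv⟩, rfl⟩; exact hv
  · intro h; exact ⟨⟨x, h⟩, rfl⟩

lemma card_allW (n : ℕ) : (allW n).card = 2 ^ n := by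
  have h1 : (allW n).card = Fintype.card (List.Vector Bool n) := by
    rw [allW, Finset.card_image_of_injective _ List.Vector.toList_injective]
    exact (Finset.card_univ (α := List.Vector Bool n))
  rw [h1, card_vector]
  simp

lemma getD_take {s : List Bool} {m i : ℕ} (h : i < (s.take m).length) :
    (s.take m).getD i false = s.getD i false := by
  rw [getD_lt h, List.getElem_take, getD_lt (by simp at h; omega)]

lemma periodLe_take {s : List Bool} {ℓ m : ℕ} (h : PeriodLe s ℓ) :
    PeriodLe (s.take m) ℓ := by
  obtain ⟨p, hp1, hpl, hp⟩ := h
  refine ⟨p, hp1, hpl, fun i hi => ?_⟩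
  have hlen : (s.take m).length ≤ s.length := by simp
  rw [getD_take (by omega), getD_take hi]
  exact hp i (by omega)

open Classical in
noncomputable def RsetF (n t : ℕ) : Finset (List Bool) :=
  (allW n).filter (fun x => x ∈ Rset n 3 t)

open Classical in
lemma mem_RsetF {n t : ℕ} {x : List Bool} : x ∈ RsetF n t ↔ x ∈ Rset n 3 t := by
  simp only [RsetF, Finset.mem_filter, mem_allW]
  exact ⟨fun h => h.2, fun h => ⟨h.1, h⟩⟩

def Qp (t : ℕ) (x : List Bool) (i : ℕ) : Prop :=
  ((x.drop i).take (t+1)).length = t+1 ∧ PeriodLe ((x.drop i).take (t+1)) 3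

lemma Qp_le {t : ℕ} {x : List Bool} {i : ℕ} (h : Qp t x i) : i + (t+1) ≤ x.length := by
  have h1 := h.1
  simp only [List.length_take, List.length_drop] at h1
  omega

open Classical in
noncomputable def BadF (n t : ℕ) : Finset (List Bool) :=
  (allW n).filter (fun x => ∃ i, Qp t x i)

open Classical in
noncomputable def phiF (t : ℕ) (x : List Bool) : ℕ × List Bool × List Bool :=
  if h : ∃ i, Qp t x i then
    (h.choose, ((x.drop h.choose).take (t+1)).take 4,
      x.take h.choose ++ x.drop (h.choose + (t+1)))
  else (0, [], [])

lemma recon {t : ℕ} {x : List Bool} {i : ℕ} (h : Qp t x i) :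
    x = x.take i ++ ((x.drop i).take (t+1) ++ x.drop (i + (t+1))) := by
  have h2 : x.drop (i + (t+1)) = (x.drop i).drop (t+1) := by
    rw [List.drop_drop]
  rw [h2, List.take_append_drop, List.take_append_drop]

lemma bad_card (n t : ℕ) (ht : 4 ≤ t) (hd : t + 1 ≤ n) :
    (BadF n t).card ≤ n * (16 * 2 ^ (n - (t+1))) := by
  classical
  have key : ∀ x ∈ BadF n t, x.length = n ∧ ∃ h : ∃ i, Qp t x i,
      h.choose + (t+1) ≤ n ∧ phiF t x = (h.choose, ((x.drop h.choose).take (t+1)).take 4,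
        x.take h.choose ++ x.drop (h.choose + (t+1))) := by
    intro x hx
    rw [BadF, Finset.mem_filter] at hx
    obtain ⟨hx1, hq⟩ := hx
    have hxl : x.length = n := mem_allW.mp hx1
    have hle := Qp_le hq.choose_spec
    exact ⟨hxl, hq, by omega, by rw [phiF]; simp only [dif_pos hq]⟩
  have hcard : (Finset.range n ×ˢ (allW 4 ×ˢ allW (n - (t+1)))).card
      = n * (16 * 2 ^ (n - (t+1))) := by
    simp [Finset.card_product, card_allW]
  rw [← hcard]
  apply Finset.card_le_card_of_injOn (phiF t)
  · intro x hx
    obtain ⟨hxl, hq, hle, hval⟩ := key x hx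
    rw [hval]
    simp only [Finset.mem_coe, Finset.mem_product, Finset.mem_range, mem_allW]
    have hwl := hq.choose_spec.1
    simp only [List.length_take, List.length_drop, hxl] at hwl
    refine ⟨by omega, ?_, ?_⟩
    · simp only [List.length_take, List.length_drop, hxl]
      omega
    · simp only [List.length_append, List.length_take, List.length_drop, hxl]
      omega
  · intro x hx x' hx' heq
    obtain ⟨hxl, hq, hle, hval⟩ := key x (by exact_mod_cast hx)
    obtain ⟨hxl', hq', hle', hval'⟩ := key x' (by exact_mod_cast hx')
    rw [hval, hval'] at heq
    simp only [Prod.mk.injEq] at heq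
    obtain ⟨e1, e2, e3⟩ := heq
    set i := hq.choose with hi
    set i' := hq'.choose with hi'
    have hW : (x.drop i).take (t+1) = (x'.drop i').take (t+1) := by
      apply det (L := t+1) (by omega) hq.choose_spec.1 hq'.choose_spec.1
        hq.choose_spec.2 hq'.choose_spec.2 e2
    -- identify prefixes and suffixes
    have hti : (x.take i).length = i := by
      rw [List.length_take]; omega
    have hti' : (x'.take i').length = i' := by
      rw [List.length_take]; omega
    rw [← e1] at e3 hti' hW
    have epre : x.take i = x'.take i := by
      have := congrArg (List.take i) e3
      rwa [List.take_left' hti, List.take_left' hti'] at this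
    have esuf : x.drop (i + (t+1)) = x'.drop (i + (t+1)) := by
      have := congrArg (List.drop i) e3
      rwa [List.drop_left' hti, List.drop_left' hti'] at this
    rw [recon hq.choose_spec, recon hq'.choose_spec, ← hi, ← hi', ← e1, epre, hW, esuf]

lemma rset_count (n t : ℕ) (hn : 1 ≤ n) (ht : 4 ≤ t) (h16 : 16 * n ≤ 2 ^ t) :
    2 ^ (n - 1) ≤ (RsetF n t).card := by
  classical
  -- Step A : complement of BadF is in RsetF
  have hA : allW n \ BadF n t ⊆ RsetF n t := by
    intro x hx
    rw [Finset.mem_sdiff] at hx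
    obtain ⟨hx1, hx2⟩ := hx
    rw [mem_RsetF]
    refine ⟨mem_allW.mp hx1, fun s hs hper => ?_⟩
    by_contra hlen
    push_neg at hlen
    obtain ⟨u, v, huv⟩ := hs
    apply hx2
    rw [BadF, Finset.mem_filter]
    have hdrop : x.drop u.length = s ++ v := by
      rw [← huv, List.append_assoc, List.drop_left]
    refine ⟨hx1, u.length, ?_, ?_⟩
    · rw [hdrop, List.take_append_of_le_length (by omega)]
      simp only [List.length_take]
      omega
    · rw [hdrop, List.take_append_of_le_length (by omega)]
      exact periodLe_take hper
  -- Step B : Bad is small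
  have hB : (BadF n t).card ≤ 2 ^ (n - 1) := by
    rcases lt_or_ge n (t+1) with hd | hd
    · have : BadF n t = ∅ := by
        rw [Finset.eq_empty_iff_forall_notMem]
        intro x hx
        rw [BadF, Finset.mem_filter] at hx
        obtain ⟨hx1, i, hxi⟩ := hx
        have hxl : x.length = n := mem_allW.mp hx1
        have := Qp_le hxi
        omega
      rw [this]
      simp
    · calc (BadF n t).card ≤ n * (16 * 2 ^ (n - (t+1))) := bad_card n t ht hd
        _ = (16 * n) * 2 ^ (n - (t+1)) := by ring
        _ ≤ 2 ^ t * 2 ^ (n - (t+1)) := Nat.mul_le_mul_right _ h16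
        _ = 2 ^ (t + (n - (t+1))) := (pow_add 2 t _).symm
        _ = 2 ^ (n - 1) := by congr 1; omega
  have hsub : (allW n \ BadF n t).card ≤ (RsetF n t).card := Finset.card_le_card hA
  have hss : BadF n t ⊆ allW n := by
    rw [BadF]
    exact Finset.filter_subset _ _
  have hsd : (allW n \ BadF n t).card = 2 ^ n - (BadF n t).card := by
    rw [Finset.card_sdiff_of_subset hss, card_allW]
  have hpow : 2 ^ n = 2 * 2 ^ (n - 1) := by
    rw [← pow_succ']
    congr 1
    omega
  omega

theorem stmt13 (n : ℕ) (hn : 4 ≤ n) (P : ℕ) (hP : P = 3 * Nat.clog 2 n + 12) :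
    ∃ (c : ZMod (1 + P)) (d : ZMod 2),
      (2 : ℝ)^(n - 1) / (2 * (1 + (P : ℝ))) ≤
        ({x : List Bool | x ∈ Rset n 3 (P / 3) ∧
            ((invNum x : ℕ) : ZMod (1 + P)) = c ∧
            ((x.count true : ℕ) : ZMod 2) = d}).ncard := by
  classical
  set t := Nat.clog 2 n + 4 with hts
  have hPt : P / 3 = t := by omega
  have h16 : 16 * n ≤ 2 ^ t := by
    have h1 : n ≤ 2 ^ Nat.clog 2 n := Nat.le_pow_clog (by norm_num) n
    have h2 : 16 * n ≤ 16 * 2 ^ Nat.clog 2 n := Nat.mul_le_mul_left 16 h1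
    rw [hts, pow_add]
    calc 16 * n ≤ 16 * 2 ^ Nat.clog 2 n := h2
      _ = 2 ^ Nat.clog 2 n * 2 ^ 4 := by ring
  have hScard : 2 ^ (n - 1) ≤ (RsetF n t).card := rset_count n t (by omega) (by omega) h16
  haveI : NeZero (1 + P) := ⟨by omega⟩
  set g : List Bool → ZMod (1 + P) × ZMod 2 :=
    fun x => (((invNum x : ℕ) : ZMod (1 + P)), ((x.count true : ℕ) : ZMod 2)) with hg
  have hfib := Finset.card_eq_sum_card_fiberwise (f := g) (s := RsetF n t)
    (t := Finset.univ) (fun x _ => Finset.mem_univ _)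
  have hcardU : (Finset.univ : Finset (ZMod (1 + P) × ZMod 2)).card = (1 + P) * 2 := by
    rw [Finset.card_univ, Fintype.card_prod, ZMod.card, ZMod.card]
  have hsum : ∑ _y ∈ (Finset.univ : Finset (ZMod (1 + P) × ZMod 2)), (RsetF n t).card
      ≤ ∑ y ∈ (Finset.univ : Finset (ZMod (1 + P) × ZMod 2)),
        ((1 + P) * 2) * ((RsetF n t).filter (fun x => g x = y)).card := by
    rw [Finset.sum_const, smul_eq_mul, hcardU, ← Finset.mul_sum, ← hfib]
  obtain ⟨y, _, hyle⟩ := Finset.exists_le_of_sum_le Finset.univ_nonempty hsum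
  refine ⟨y.1, y.2, ?_⟩
  have hset : {x : List Bool | x ∈ Rset n 3 (P / 3) ∧
      ((invNum x : ℕ) : ZMod (1 + P)) = y.1 ∧
      ((x.count true : ℕ) : ZMod 2) = y.2}
      = ↑((RsetF n t).filter (fun x => g x = y)) := by
    ext x
    simp only [Set.mem_setOf_eq, Finset.coe_filter, mem_RsetF, hPt, hg, Prod.ext_iff]
  rw [hset, Set.ncard_coe_finset]
  have hchain : 2 ^ (n - 1) ≤ ((1 + P) * 2) * ((RsetF n t).filter (fun x => g x = y)).card :=
    le_trans hScard hyle
  have hreal : ((2 : ℝ)) ^ (n - 1)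
      ≤ ((1 + P) * 2 : ℝ) * (((RsetF n t).filter (fun x => g x = y)).card : ℝ) := by
    have := (Nat.cast_le (α := ℝ)).mpr hchain
    push_cast at this
    linarith
  rw [div_le_iff₀ (by positivity)]
  nlinarith [hreal]
end

section
/- Let x = u a d b w and y = u ā e b̄ w be distinct binary sequences of length n, where u, w, d, e ∈ {0,1}*, |d| = |e|, and a, b ∈ {0,1}. If I_1(x) ∩ I_1(y) = ∅, then I_2(x) ∩ I_2(y) = { u s w : s ∈ I_2(a d b) ∩ I_2(ā e b̄) }; in particular, |I_2(x) ∩ I_2(y)| = |I_2(a d b) ∩ I_2(ā e b̄)|. -/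
open List

lemma insBall_rev {t : ℕ} {x z : List Bool} (h : z ∈ insBall t x) :
    z.reverse ∈ insBall t x.reverse := by
  obtain ⟨hl, hs⟩ := h
  exact ⟨by simpa using hl, hs.reverse⟩

lemma peel (u : List Bool) : ∀ (X Y z : List Bool),
    X.length = Y.length →
    insBall 1 (u ++ X) ∩ insBall 1 (u ++ Y) = ∅ →
    z ∈ insBall 2 (u ++ X) → z ∈ insBall 2 (u ++ Y) →
    ∃ s, z = u ++ s ∧ s ∈ insBall 2 X ∧ s ∈ insBall 2 Y := by
  induction u with
  | nil => intro X Y z _ _ hX hY; exact ⟨z, rfl, hX, hY⟩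
  | cons c u ih =>
    intro X Y z hlen h1 hX hY
    obtain ⟨hzl, hzs⟩ := hX
    obtain ⟨hzl', hzs'⟩ := hY
    cases z with
    | nil => simp at hzl
    | cons c' z' =>
      by_cases hc : c' = c
      · subst hc
        have h1' : insBall 1 (u ++ X) ∩ insBall 1 (u ++ Y) = ∅ := by
          rw [Set.eq_empty_iff_forall_notMem]
          rintro v ⟨⟨hv1, hv2⟩, hv3, hv4⟩
          have : c' :: v ∈ insBall 1 ((c' :: u) ++ X) ∩ insBall 1 ((c' :: u) ++ Y) :=
            ⟨⟨by simp [hv1], List.cons_sublist_cons.mpr hv2⟩,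
             ⟨by simp [hv3], List.cons_sublist_cons.mpr hv4⟩⟩
          rw [h1] at this
          exact this
        have hX' : z' ∈ insBall 2 (u ++ X) :=
          ⟨by simp only [List.length_cons, List.length_append] at hzl ⊢; omega,
           List.cons_sublist_cons.mp hzs⟩
        have hY' : z' ∈ insBall 2 (u ++ Y) :=
          ⟨by simp only [List.length_cons, List.length_append] at hzl' ⊢; omega,
           List.cons_sublist_cons.mp hzs'⟩
        obtain ⟨s, rfl, hsX, hsY⟩ := ih X Y z' hlen h1' hX' hY'
        exact ⟨s, rfl, hsX, hsY⟩
      · exfalso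
        have hsub : (c :: (u ++ X)) <+ z' := by
          cases hzs with
          | cons _ h => exact h
          | cons_cons => exact (hc rfl).elim
        have hsub' : (c :: (u ++ Y)) <+ z' := by
          cases hzs' with
          | cons _ h => exact h
          | cons_cons => exact (hc rfl).elim
        have : z' ∈ insBall 1 ((c :: u) ++ X) ∩ insBall 1 ((c :: u) ++ Y) :=
          ⟨⟨by simp only [List.length_cons, List.length_append] at hzl ⊢; omega, hsub⟩,
           ⟨by simp only [List.length_cons, List.length_append] at hzl' ⊢; omega, hsub'⟩⟩
        rw [h1] at this
        exact this

theorem stmt14 (n : ℕ) (u w d e : List Bool) (a b : Bool)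
    (hde : d.length = e.length) (x y : List Bool)
    (hx : x = u ++ [a] ++ d ++ [b] ++ w)
    (hy : y = u ++ [!a] ++ e ++ [!b] ++ w)
    (hlen : x.length = n) (hne : x ≠ y)
    (h1 : insBall 1 x ∩ insBall 1 y = ∅) :
    insBall 2 x ∩ insBall 2 y =
      (fun s => u ++ s ++ w) ''
        (insBall 2 ([a] ++ d ++ [b]) ∩ insBall 2 ([!a] ++ e ++ [!b])) ∧
    (insBall 2 x ∩ insBall 2 y).ncard =
      (insBall 2 ([a] ++ d ++ [b]) ∩ insBall 2 ([!a] ++ e ++ [!b])).ncard := by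

  subst hx hy
  have ex : u ++ [a] ++ d ++ [b] ++ w = u ++ (([a] ++ d ++ [b]) ++ w) := by
    simp [List.append_assoc]
  have ey : u ++ [!a] ++ e ++ [!b] ++ w = u ++ (([!a] ++ e ++ [!b]) ++ w) := by
    simp [List.append_assoc]
  rw [ex, ey] at h1 ⊢
  set X : List Bool := [a] ++ d ++ [b] with hXdef
  set Y : List Bool := [!a] ++ e ++ [!b] with hYdef
  have hXY : X.length = Y.length := by simp [hXdef, hYdef, hde]
  have key : insBall 2 (u ++ (X ++ w)) ∩ insBall 2 (u ++ (Y ++ w)) =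
      (fun s => u ++ s ++ w) '' (insBall 2 X ∩ insBall 2 Y) := by
    ext z
    constructor
    · rintro ⟨hzX, hzY⟩
      obtain ⟨s₁, rfl, hs₁X, hs₁Y⟩ := peel u (X ++ w) (Y ++ w) z (by simp [hXY]) h1 hzX hzY
      have h1' : insBall 1 (w.reverse ++ X.reverse) ∩ insBall 1 (w.reverse ++ Y.reverse) = ∅ := by
        rw [Set.eq_empty_iff_forall_notMem]
        rintro v ⟨⟨hv1, hv2⟩, hv3, hv4⟩
        have hvX : X ++ w <+ v.reverse := by simpa using hv2.reverse
        have hvY : Y ++ w <+ v.reverse := by simpa using hv4.reverse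
        have : u ++ v.reverse ∈ insBall 1 (u ++ (X ++ w)) ∩ insBall 1 (u ++ (Y ++ w)) := by
          refine ⟨⟨?_, hvX.append_left u⟩, ⟨?_, hvY.append_left u⟩⟩
          · simp only [List.length_append, List.length_reverse] at hv1 ⊢; omega
          · simp only [List.length_append, List.length_reverse] at hv3 ⊢; omega
        rw [h1] at this
        exact this
      have hs₁X' : s₁.reverse ∈ insBall 2 (w.reverse ++ X.reverse) := by
        have := insBall_rev hs₁X
        simpa using this
      have hs₁Y' : s₁.reverse ∈ insBall 2 (w.reverse ++ Y.reverse) := by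
        have := insBall_rev hs₁Y
        simpa using this
      obtain ⟨t, ht, htX, htY⟩ :=
        peel w.reverse X.reverse Y.reverse s₁.reverse (by simp [hXY]) h1' hs₁X' hs₁Y'
      have hs₁ : s₁ = t.reverse ++ w := by
        rw [← List.reverse_reverse s₁, ht]; simp
      refine ⟨t.reverse, ⟨?_, ?_⟩, ?_⟩
      · have := insBall_rev htX; simpa using this
      · have := insBall_rev htY; simpa using this
      · simp [hs₁, List.append_assoc]
    · rintro ⟨s, ⟨⟨hl1, hs1⟩, hl2, hs2⟩, rfl⟩
      refine ⟨⟨?_, ?_⟩, ?_, ?_⟩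
      · simp only [List.length_append] at hl1 ⊢; omega
      · simpa [List.append_assoc] using (hs1.append_right w).append_left u
      · simp only [List.length_append] at hl2 ⊢; omega
      · simpa [List.append_assoc] using (hs2.append_right w).append_left u
  refine ⟨key, ?_⟩
  rw [key]
  apply Set.ncard_image_of_injective
  intro s t h
  simp only [List.append_assoc] at h
  exact List.append_cancel_right (List.append_cancel_left h)
end

section
/- Let a, b ∈ {0,1} and d, e ∈ {0,1}* with |d| = |e|. Suppose d b and ā e are Type-A confusable, witnessed by a decomposition d b = α w β and ā e = α w̄ β with w an alternating sequence of length at least 1, and suppose in addition that a d and e b̄ are Type-A confusable. Then there exist p₁, p₂, p₁′, p₂′ ∈ {0,1}* such that α = p₁′ p₂′ and β = p₁ p₂, where each of p₁, p₂, p₁′, p₂′ has period at most 2. -/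
open List

lemma getD_app_left (u v : List Bool) (i : ℕ) (h : i < u.length) :
    (u ++ v).getD i false = u.getD i false := by
  rw [List.getD_append _ _ _ _ h]

lemma getD_app_right (u v : List Bool) (i : ℕ) (h : u.length ≤ i) :
    (u ++ v).getD i false = v.getD (i - u.length) false := by
  rw [List.getD_append_right _ _ _ _ h]

lemma getD_mid (u w v : List Bool) (j : ℕ) (h1 : u.length ≤ j) (h2 : j < u.length + w.length) :
    (u ++ w ++ v).getD j false = w.getD (j - u.length) false := by
  rw [List.append_assoc, getD_app_right u _ j h1, getD_app_left _ _ _ (by omega)]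

lemma getD_last (u w v : List Bool) (j : ℕ) (h1 : u.length + w.length ≤ j) :
    (u ++ w ++ v).getD j false = v.getD (j - u.length - w.length) false := by
  rw [List.append_assoc, getD_app_right u _ j (by omega), getD_app_right _ _ _ (by omega)]

lemma getD_first (u w v : List Bool) (j : ℕ) (h1 : j < u.length) :
    (u ++ w ++ v).getD j false = u.getD j false := by
  rw [List.append_assoc, getD_app_left u _ j h1]

lemma bcompl_length (w : List Bool) : (bcompl w).length = w.length := by simp [bcompl]

lemma bcompl_getD (w : List Bool) (k : ℕ) (h : k < w.length) :
    (bcompl w).getD k false = !(w.getD k false) := by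
  simp [bcompl, List.getD_eq_getElem?_getD, List.getElem?_map, List.getElem?_eq_getElem h]

lemma wpow_succ (p : List Bool) (i : ℕ) : wpow p (i+1) = p ++ wpow p i := by
  simp [wpow, List.replicate_succ]

lemma wpow_pair_length (a : Bool) (i : ℕ) : (wpow [a,!a] i).length = 2*i := by
  induction i with
  | zero => simp [wpow]
  | succ n ih => simp [wpow, List.replicate_succ] at *; omega

lemma wpow_getD (a : Bool) : ∀ (i k : ℕ), k < 2*i →
    (wpow [a,!a] i).getD k false = if k % 2 = 0 then a else !a := by
  intro i
  induction i with
  | zero => omega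
  | succ n ih =>
    intro k hk
    rw [wpow_succ]
    match k with
    | 0 => simp
    | 1 => simp
    | (k+2) =>
      have h0 : ([a, !a] ++ wpow [a,!a] n).getD (k+2) false = (wpow [a,!a] n).getD k false := rfl
      rw [h0, ih k (by omega)]
      have : (k+2) % 2 = k % 2 := by omega
      rw [this]

lemma isAlt_getD {w : List Bool} (hw : IsAlt w) :
    ∃ a : Bool, ∀ k, k < w.length → w.getD k false = if k % 2 = 0 then a else !a := by
  obtain ⟨a, h | h⟩ := hw
  · obtain ⟨i, hi, rfl⟩ := h
    exact ⟨a, fun k hk => wpow_getD a i k (by rw [wpow_pair_length] at hk; omega)⟩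
  · obtain ⟨j, rfl⟩ := h
    refine ⟨a, fun k hk => ?_⟩
    rw [List.length_append, wpow_pair_length] at hk
    simp only [List.length_singleton] at hk
    by_cases hk2 : k < 2*j
    · rw [getD_app_left _ _ _ (by rw [wpow_pair_length]; omega), wpow_getD a j k hk2]
    · have hkk : k = 2*j := by omega
      rw [getD_app_right _ _ _ (by rw [wpow_pair_length]; omega)]
      subst hkk
      simp [wpow_pair_length, Nat.mul_mod_right]

lemma isAlt_length {w : List Bool} (hw : IsAlt w) : 1 ≤ w.length := by
  obtain ⟨a, h | h⟩ := hw
  · obtain ⟨i, hi, rfl⟩ := h; rw [wpow_pair_length]; omega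
  · obtain ⟨j, rfl⟩ := h; simp

lemma isAlt_step {w : List Bool} (hw : IsAlt w) :
    ∀ k, k + 1 < w.length → w.getD (k+1) false = !(w.getD k false) := by
  obtain ⟨A, hA⟩ := isAlt_getD hw
  intro k hk
  rw [hA k (by omega), hA (k+1) hk]
  rcases Nat.mod_two_eq_zero_or_one k with h | h
  · have h1 : (k+1) % 2 = 1 := by omega
    simp [h, h1]
  · have h1 : (k+1) % 2 = 0 := by omega
    simp [h, h1]

lemma getD_take_s15 (t : List Bool) (n i : ℕ) (h : i < n) :
    (t.take n).getD i false = t.getD i false := by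
  simp [List.getD_eq_getElem?_getD, List.getElem?_take, h]

lemma getD_drop (t : List Bool) (n i : ℕ) :
    (t.drop n).getD i false = t.getD (n+i) false := by
  simp [List.getD_eq_getElem?_getD, List.getElem?_drop]

lemma split_two (t : List Bool) (M : ℕ)
    (h : ∀ i, i + 2 < t.length → t.getD i false ≠ t.getD (i+2) false →
      i + 2 = M ∨ i + 3 = M) :
    ∃ p q : List Bool, t = p ++ q ∧ PeriodLe p 2 ∧ PeriodLe q 2 := by
  refine ⟨t.take (M-1), t.drop (M-1), (List.take_append_drop _ _).symm,
    ⟨2, by norm_num, le_refl 2, ?_⟩, ⟨2, by norm_num, le_refl 2, ?_⟩⟩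
  · intro i hi
    rw [List.length_take] at hi
    have h1 : i + 2 < M - 1 := by omega
    have h2 : i + 2 < t.length := by omega
    rw [getD_take_s15 t (M-1) i (by omega), getD_take_s15 t (M-1) (i+2) (by omega)]
    by_contra hne
    rcases h i h2 hne with h' | h' <;> omega
  · intro i hi
    rw [List.length_drop] at hi
    rw [getD_drop, getD_drop]
    by_contra hne
    have h2 : (M-1+i) + 2 < t.length := by omega
    have heq : M-1+(i+2) = (M-1+i)+2 := by omega
    rw [heq] at hne
    rcases h _ h2 hne with h' | h' <;> omega

theorem stmt15 (a b : Bool) (d e : List Bool) (hde : d.length = e.length)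
    (α β w : List Bool) (hw : IsAlt w)
    (h1 : d ++ [b] = α ++ w ++ β) (h2 : [!a] ++ e = α ++ bcompl w ++ β)
    (hA : TypeA ([a] ++ d) (e ++ [!b])) :
    ∃ p1 p2 p1' p2' : List Bool,
      α = p1' ++ p2' ∧ β = p1 ++ p2 ∧
      PeriodLe p1 2 ∧ PeriodLe p2 2 ∧ PeriodLe p1' 2 ∧ PeriodLe p2' 2 := by
  obtain ⟨u, v, w', hw', hx', hy'⟩ := hA
  have hm : 1 ≤ w.length := isAlt_length hw
  have hm' : 1 ≤ w'.length := isAlt_length hw'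
  have hlen1 : α.length + w.length + β.length = d.length + 1 := by
    have := congrArg List.length h1
    simp at this; omega
  have hlenx' : u.length + w'.length + v.length = d.length + 1 := by
    have := congrArg List.length hx'
    simp at this; omega
  set S := u.length with hS
  set Mw := w'.length with hMw
  -- bridges
  have BX : ∀ j, j < d.length →
      ([a] ++ d).getD (j+1) false = (d ++ [b]).getD j false := by
    intro j hj
    have l1 : ([a] ++ d).getD (j+1) false = d.getD j false := by
      simp [List.getD_cons_succ]
    rw [l1, getD_app_left d [b] j hj]
  have BY : ∀ j, j + 1 < d.length + 1 →
      (e ++ [!b]).getD j false = ([!a] ++ e).getD (j+1) false := by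
    intro j hj
    have l1 : ([!a] ++ e).getD (j+1) false = e.getD j false := by
      simp [List.getD_cons_succ]
    rw [l1, getD_app_left e [!b] j (by omega)]
  -- position facts
  have hxα : ∀ k, k < α.length → (d ++ [b]).getD k false = α.getD k false := by
    intro k hk; rw [h1, getD_first _ _ _ _ hk]
  have hyα : ∀ k, k < α.length → ([!a] ++ e).getD k false = α.getD k false := by
    intro k hk; rw [h2, getD_first _ _ _ _ hk]
  have hxβ : ∀ i, i < β.length →
      (d ++ [b]).getD (α.length + w.length + i) false = β.getD i false := by
    intro i hi
    have hidx : α.length + w.length + i - α.length - w.length = i := by omega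
    rw [h1, getD_last _ _ _ _ (by omega), hidx]
  have hyβ : ∀ i, i < β.length →
      ([!a] ++ e).getD (α.length + w.length + i) false = β.getD i false := by
    intro i hi
    have hbl : (bcompl w).length = w.length := bcompl_length w
    have hidx : α.length + w.length + i - α.length - (bcompl w).length = i := by
      rw [hbl]; omega
    rw [h2, getD_last _ _ _ _ (by rw [hbl]; omega), hidx]
  -- F-facts
  have F3 : ∀ j, S ≤ j → j + 1 < S + Mw →
      ([a] ++ d).getD (j+1) false = !(([a] ++ d).getD j false) := by
    intro j hj1 hj2
    rw [hx', getD_mid u w' v (j+1) (by omega) (by omega),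
      getD_mid u w' v j (by omega) (by omega)]
    have hidx : j + 1 - u.length = (j - u.length) + 1 := by omega
    rw [hidx]
    exact isAlt_step hw' (j - u.length) (by omega)
  have F1 : ∀ j, j < d.length + 1 → (j < S ∨ S + Mw ≤ j) →
      ([a] ++ d).getD j false = (e ++ [!b]).getD j false := by
    intro j hjn hj
    rw [hx', hy']
    rcases hj with hj | hj
    · rw [getD_first _ _ _ _ hj, getD_first _ _ _ _ hj]
    · rw [getD_last u w' v j hj,
        getD_last u (bcompl w') v j (by rw [bcompl_length]; omega), bcompl_length]
  -- violations of α
  have hVα : ∀ i, i + 2 < α.length → α.getD i false ≠ α.getD (i+2) false →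
      i + 2 = S + Mw ∨ i + 3 = S + Mw := by
    intro i hi hne
    have hlα : α.length ≤ d.length := by omega
    by_cases hin : S ≤ i + 1 ∧ i + 1 < S + Mw
    · by_cases hb : i + 3 < S + Mw
      · exfalso
        have e1 := F3 (i+1) hin.1 (by omega)
        have e2 := F3 (i+2) (by omega) (by omega)
        have b1 : ([a] ++ d).getD (i+1) false = α.getD i false := by
          rw [BX i (by omega), hxα i (by omega)]
        have b2 : ([a] ++ d).getD (i+3) false = α.getD (i+2) false := by
          rw [BX (i+2) (by omega), hxα (i+2) (by omega)]
        apply hne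
        rw [← b1, ← b2, e2, e1, Bool.not_not]
      · omega
    · exfalso
      have e1 := F1 (i+1) (by omega) (by omega)
      have b1 : ([a] ++ d).getD (i+1) false = α.getD i false := by
        rw [BX i (by omega), hxα i (by omega)]
      have b2 : (e ++ [!b]).getD (i+1) false = α.getD (i+2) false := by
        rw [BY (i+1) (by omega), hyα (i+2) (by omega)]
      exact hne (by rw [← b1, ← b2, e1])
  -- violations of β
  have hVβ : ∀ i, i + 2 < β.length → β.getD i false ≠ β.getD (i+2) false →
      i + 2 = (S + Mw) - (α.length + w.length) ∨
      i + 3 = (S + Mw) - (α.length + w.length) := by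
    intro i hi hne
    set k1 := α.length + w.length + i with hk1
    have hk1n : k1 + 2 < d.length + 1 := by omega
    have b1 : ([a] ++ d).getD (k1+1) false = β.getD i false := by
      rw [BX k1 (by omega), hxβ i (by omega)]
    by_cases hin : S ≤ k1 + 1 ∧ k1 + 1 < S + Mw
    · by_cases hb : k1 + 3 < S + Mw
      · exfalso
        have e1 := F3 (k1+1) hin.1 (by omega)
        have e2 := F3 (k1+2) (by omega) (by omega)
        have b2 : ([a] ++ d).getD (k1+3) false = β.getD (i+2) false := by
          rw [BX (k1+2) (by omega),
            show k1 + 2 = α.length + w.length + (i+2) from by omega,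
            hxβ (i+2) (by omega)]
        apply hne
        rw [← b1, ← b2, e2, e1, Bool.not_not]
      · omega
    · exfalso
      have e1 := F1 (k1+1) (by omega) (by omega)
      have b2 : (e ++ [!b]).getD (k1+1) false = β.getD (i+2) false := by
        rw [BY (k1+1) (by omega),
          show k1 + 2 = α.length + w.length + (i+2) from by omega,
          hyβ (i+2) (by omega)]
      exact hne (by rw [← b1, ← b2, e1])
  obtain ⟨p1', p2', hα, hp1', hp2'⟩ := split_two α (S + Mw) hVα
  obtain ⟨p1, p2, hβ, hp1, hp2⟩ :=
    split_two β ((S + Mw) - (α.length + w.length)) hVβ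
  exact ⟨p1, p2, p1', p2', hα, hβ, hp1, hp2, hp1', hp2'⟩
end

section
/- Let a, b ∈ {0,1} and d, e ∈ {0,1}* with |d| = |e|. Suppose d b and ā e are Type-A confusable, witnessed by a decomposition d b = α w β and ā e = α w̄ β with w an alternating sequence of length at least 1, and suppose in addition that a d and e b̄ are Type-B confusable. Then there exist p₁, p₂, p₃, p₁′, p₂′, p₃′ ∈ {0,1}* such that α = p₁′ p₂′ p₃′ and β = p₁ p₂ p₃, where each of p₁, p₂, p₃, p₁′, p₂′, p₃′ has period at most 3. -/
open List

private lemma getD_app_lt (l r : List Bool) (i : ℕ) (h : i < l.length) :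
    (l ++ r).getD i false = l.getD i false := List.getD_append _ _ _ _ h

private lemma getD_app_ge (l r : List Bool) (i : ℕ) :
    (l ++ r).getD (l.length + i) false = r.getD i false := by
  rw [List.getD_append_right _ _ _ _ (Nat.le_add_right _ _)]
  congr 1; omega

private lemma getD_drop' (l : List Bool) (n j : ℕ) :
    (l.drop n).getD j false = l.getD (n + j) false := by
  simp [List.getD_eq_getElem?_getD, List.getElem?_drop]

private lemma getD_take' (l : List Bool) (n j : ℕ) (h : j < n) :
    (l.take n).getD j false = l.getD j false := by
  simp [List.getD_eq_getElem?_getD, List.getElem?_take, h]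

private lemma split3 (l : List Bool) (c1 c2 : ℕ) (h : c1 ≤ c2) :
    l = l.take c1 ++ ((l.drop c1).take (c2 - c1)) ++ l.drop c2 := by
  have h2 : (l.drop c1).drop (c2 - c1) = l.drop c2 := by
    rw [List.drop_drop]; congr 1; omega
  nth_rewrite 1 [← List.take_append_drop c1 l]
  nth_rewrite 1 [← List.take_append_drop (c2 - c1) (l.drop c1)]
  rw [h2, List.append_assoc]

private lemma build_seg (x s : List Bool) (L p e2 P : ℕ)
    (hs : ∀ j, j < s.length → s.getD j false = x.getD (L + j) false)
    (hP1 : 1 ≤ P) (hP3 : P ≤ 3) (hpe : p ≤ e2)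
    (R1 : ∀ j, L ≤ j → j + 2 < p → j + 2 < L + s.length →
      x.getD j false = x.getD (j+2) false)
    (R2 : ∀ j, L ≤ j → p ≤ j → j + P < e2 → j + P < L + s.length →
      x.getD j false = x.getD (j+P) false)
    (R3 : ∀ j, L ≤ j → e2 ≤ j → j + 2 < L + s.length →
      x.getD j false = x.getD (j+2) false) :
    ∃ p1 p2 p3 : List Bool, s = p1 ++ p2 ++ p3 ∧
      PeriodLe p1 3 ∧ PeriodLe p2 3 ∧ PeriodLe p3 3 := by
  set c1 := min (p - L) s.length with hc1
  set c2 := min (e2 - L) s.length with hc2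
  have hcle : c1 ≤ c2 := by omega
  refine ⟨s.take c1, (s.drop c1).take (c2 - c1), s.drop c2,
    split3 s c1 c2 hcle, ⟨2, by norm_num, by norm_num, ?_⟩,
    ⟨P, hP1, hP3, ?_⟩, ⟨2, by norm_num, by norm_num, ?_⟩⟩
  · intro j hj
    rw [List.length_take] at hj
    have hj1 : j < s.length := by omega
    have hj2 : j + 2 < s.length := by omega
    rw [getD_take' _ _ _ (by omega), getD_take' _ _ _ (by omega), hs j hj1, hs _ hj2]
    have := R1 (L + j) (by omega) (by omega) (by omega)
    rwa [show L + j + 2 = L + (j + 2) by omega] at this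
  · intro j hj
    rw [List.length_take, List.length_drop] at hj
    have hj1 : c1 + j < s.length := by omega
    have hj2 : c1 + (j + P) < s.length := by omega
    rw [getD_take' _ _ _ (by omega), getD_take' _ _ _ (by omega), getD_drop', getD_drop',
      hs _ hj1, hs _ hj2]
    have := R2 (L + (c1 + j)) (by omega) (by omega) (by omega) (by omega)
    rwa [show L + (c1 + j) + P = L + (c1 + (j + P)) by omega] at this
  · intro j hj
    rw [List.length_drop] at hj
    have hj1 : c2 + j < s.length := by omega
    have hj2 : c2 + (j + 2) < s.length := by omega
    rw [getD_drop', getD_drop', hs _ hj1, hs _ hj2]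
    have := R3 (L + (c2 + j)) (by omega) (by omega) (by omega)
    rwa [show L + (c2 + j) + 2 = L + (c2 + (j + 2)) by omega] at this

theorem stmt16 (a b : Bool) (d e : List Bool) (hde : d.length = e.length)
    (α β w : List Bool) (hw : IsAlt w)
    (h1 : d ++ [b] = α ++ w ++ β) (h2 : [!a] ++ e = α ++ bcompl w ++ β)
    (hB : TypeB ([a] ++ d) (e ++ [!b])) :
    ∃ p1 p2 p3 p1' p2' p3' : List Bool,
      α = p1' ++ p2' ++ p3' ∧ β = p1 ++ p2 ++ p3 ∧
      PeriodLe p1 3 ∧ PeriodLe p2 3 ∧ PeriodLe p3 3 ∧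
      PeriodLe p1' 3 ∧ PeriodLe p2' 3 ∧ PeriodLe p3' 3 := by
  classical
  obtain ⟨u, v, t, c, f, hset⟩ := hB
  set x : List Bool := α ++ w ++ β with hxdef
  set y : List Bool := α ++ bcompl w ++ β with hydef
  have hbl : (bcompl w).length = w.length := by simp [bcompl]
  have hlen1 : d.length + 1 = α.length + (w.length + β.length) := by
    have h := congrArg List.length h1
    rw [hxdef] at h
    simp only [List.length_append, List.length_singleton] at h
    omega
  have PA : ∀ i, i < d.length → ([a] ++ d).getD (i+1) false = x.getD i false := by
    intro i hi
    rw [List.singleton_append, List.getD_cons_succ, ← h1, getD_app_lt d [b] i hi]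
  have PB : ∀ i, i < d.length → (e ++ [!b]).getD i false = y.getD (i+1) false := by
    intro i hi
    rw [getD_app_lt e [!b] i (by omega), ← h2, List.singleton_append, List.getD_cons_succ]
  have P1 : ∀ j, j < α.length → y.getD j false = x.getD j false := by
    intro j hj
    rw [hxdef, hydef,
      getD_app_lt (α ++ bcompl w) β j (by rw [List.length_append]; omega),
      getD_app_lt (α ++ w) β j (by rw [List.length_append]; omega),
      getD_app_lt α (bcompl w) j hj, getD_app_lt α w j hj]
  have P3 : ∀ j, α.length + w.length ≤ j → y.getD j false = x.getD j false := by
    intro j hj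
    have e1 := getD_app_ge (α ++ w) β (j - (α.length + w.length))
    have e2 := getD_app_ge (α ++ bcompl w) β (j - (α.length + w.length))
    rw [List.length_append] at e1 e2
    rw [hbl] at e2
    rw [show α.length + w.length + (j - (α.length + w.length)) = j by omega] at e1 e2
    rw [hxdef, hydef, e1, e2]
  have hsα : ∀ j, j < α.length → α.getD j false = x.getD (0 + j) false := by
    intro j hj
    rw [hxdef, Nat.zero_add, getD_app_lt (α ++ w) β j (by rw [List.length_append]; omega),
      getD_app_lt α w j hj]
  have hsβ : ∀ j, j < β.length → β.getD j false = x.getD (α.length + w.length + j) false := by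
    intro j hj
    have e1 := getD_app_ge (α ++ w) β j
    rw [List.length_append] at e1
    rw [hxdef, e1]
  have KEY : ∀ P e2 : ℕ, 1 ≤ P → P ≤ 3 → u.length + 1 ≤ e2 →
      u.length + v.length + 3 ≤ e2 →
      (∀ j, j + 2 ≤ u.length →
        (j + 2 < α.length ∨ (α.length + w.length ≤ j ∧ j + 2 ≤ d.length)) →
        x.getD j false = x.getD (j+2) false) →
      (∀ j, u.length ≤ j → j + P < e2 →
        (j + P < α.length ∨ (α.length + w.length ≤ j ∧ j + P ≤ d.length)) →
        x.getD j false = x.getD (j+P) false) →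
      (∀ j, u.length + v.length + 2 ≤ j →
        (j + 2 < α.length ∨ (α.length + w.length ≤ j ∧ j + 2 ≤ d.length)) →
        x.getD j false = x.getD (j+2) false) →
      (∃ p1 p2 p3 p1' p2' p3' : List Bool,
        α = p1' ++ p2' ++ p3' ∧ β = p1 ++ p2 ++ p3 ∧
        PeriodLe p1 3 ∧ PeriodLe p2 3 ∧ PeriodLe p3 3 ∧
        PeriodLe p1' 3 ∧ PeriodLe p2' 3 ∧ PeriodLe p3' 3) := by
    intro P e2 hP1 hP3 hpe he2 UX M TX
    obtain ⟨a1, a2, a3, haeq, hpa1, hpa2, hpa3⟩ :=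
      build_seg x α 0 (u.length + 1) e2 P hsα hP1 hP3 (by omega)
        (by intro j h0 hj2 hj3; exact UX j (by omega) (Or.inl (by omega)))
        (by intro j h0 h1' hj2 hj3; exact M j (by omega) hj2 (Or.inl (by omega)))
        (by intro j h0 hj2 hj3; exact TX j (by omega) (Or.inl (by omega)))
    obtain ⟨b1, b2, b3, hbeq, hpb1, hpb2, hpb3⟩ :=
      build_seg x β (α.length + w.length) (u.length + 1) e2 P hsβ hP1 hP3 (by omega)
        (by intro j h0 hj2 hj3; exact UX j (by omega) (Or.inr ⟨by omega, by omega⟩))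
        (by intro j h0 h1' hj2 hj3; exact M j (by omega) hj2 (Or.inr ⟨by omega, by omega⟩))
        (by intro j h0 hj2 hj3; exact TX j (by omega) (Or.inr ⟨by omega, by omega⟩))
    exact ⟨b1, b2, b3, a1, a2, a3, haeq, hbeq, hpb1, hpb2, hpb3, hpa1, hpa2, hpa3⟩
  have hS1 : u ++ [c, !c] ++ v ++ [f] ++ t = u ++ ([c] ++ (((!c) :: (v ++ [f])) ++ t)) := by
    simp
  have hS2 : u ++ [!c] ++ v ++ [f, !f] ++ t = u ++ (((!c) :: (v ++ [f])) ++ ([!f] ++ t)) := by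
    simp
  rw [hS1, hS2, Set.pair_eq_pair_iff] at hset
  rcases hset with ⟨hA, hB2⟩ | ⟨hA, hB2⟩
  · -- Case 1 : [a]++d = u ++ [c] ++ z ++ t,  e++[!b] = u ++ z ++ [!f] ++ t
    set z : List Bool := (!c) :: (v ++ [f]) with hzdef
    have hzlen : z.length = v.length + 2 := by
      rw [hzdef]; simp only [List.length_cons, List.length_append, List.length_singleton, List.length_nil]
    have U : ∀ i, i < u.length →
        ([a] ++ d).getD i false = (e ++ [!b]).getD i false := by
      intro i hi
      rw [hA, hB2, getD_app_lt u ([c] ++ (z ++ t)) i hi,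
        getD_app_lt u (z ++ ([!f] ++ t)) i hi]
    have AZ : ∀ r, r < z.length →
        ([a] ++ d).getD (u.length + (1 + r)) false = z.getD r false := by
      intro r hr
      rw [hA, getD_app_ge u ([c] ++ (z ++ t)) (1 + r)]
      have e1 := getD_app_ge [c] (z ++ t) r
      rw [List.length_singleton] at e1
      rw [e1, getD_app_lt z t r hr]
    have BZ : ∀ r, r < z.length →
        (e ++ [!b]).getD (u.length + r) false = z.getD r false := by
      intro r hr
      rw [hB2, getD_app_ge u (z ++ ([!f] ++ t)) r, getD_app_lt z ([!f] ++ t) r hr]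
    have AT : ∀ s, ([a] ++ d).getD (u.length + (1 + (z.length + s))) false
        = t.getD s false := by
      intro s
      rw [hA, getD_app_ge u ([c] ++ (z ++ t)) (1 + (z.length + s))]
      have e1 := getD_app_ge [c] (z ++ t) (z.length + s)
      rw [List.length_singleton] at e1
      rw [e1, getD_app_ge z t s]
    have BT : ∀ s, (e ++ [!b]).getD (u.length + (z.length + (1 + s))) false
        = t.getD s false := by
      intro s
      rw [hB2, getD_app_ge u (z ++ ([!f] ++ t)) (z.length + (1 + s)),
        getD_app_ge z ([!f] ++ t) (1 + s)]
      have e1 := getD_app_ge [!f] t s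
      rw [List.length_singleton] at e1
      rw [e1]
    refine KEY 1 (u.length + v.length + 3) (by norm_num) (by norm_num) (by omega)
      (by omega) ?_ ?_ ?_
    · -- UX
      intro j hj hg
      rcases hg with hg | hg
      · have hdn : j < d.length := by omega
        have hdn2 : j + 1 < d.length := by omega
        rw [← PA j hdn, U (j+1) (by omega), PB (j+1) hdn2]
        exact P1 (j+2) hg
      · have hdn : j < d.length := by omega
        have hdn2 : j + 1 < d.length := by omega
        rw [← PA j hdn, U (j+1) (by omega), PB (j+1) hdn2]
        exact P3 (j+2) (by omega)
    · -- M (period 1)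
      intro j hj hj2 hg
      have hr : j - u.length < z.length := by omega
      have hZA := AZ (j - u.length) hr
      have hZB := BZ (j - u.length) hr
      rw [show u.length + (1 + (j - u.length)) = j + 1 by omega] at hZA
      rw [show u.length + (j - u.length) = j by omega] at hZB
      rcases hg with hg | hg
      · have hdn : j < d.length := by omega
        rw [← PA j hdn, hZA, ← hZB, PB j hdn]
        exact P1 (j+1) hg
      · have hdn : j < d.length := by omega
        rw [← PA j hdn, hZA, ← hZB, PB j hdn]
        exact P3 (j+1) (by omega)
    · -- TX
      intro j hj hg
      have hT1 := AT (j - (u.length + z.length))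
      have hT2 := BT (j - (u.length + z.length))
      rw [show u.length + (1 + (z.length + (j - (u.length + z.length)))) = j + 1
        by omega] at hT1
      rw [show u.length + (z.length + (1 + (j - (u.length + z.length)))) = j + 1
        by omega] at hT2
      rcases hg with hg | hg
      · have hdn : j < d.length := by omega
        have hdn2 : j + 1 < d.length := by omega
        rw [← PA j hdn, hT1, ← hT2, PB (j+1) hdn2]
        exact P1 (j+2) hg
      · have hdn : j < d.length := by omega
        have hdn2 : j + 1 < d.length := by omega
        rw [← PA j hdn, hT1, ← hT2, PB (j+1) hdn2]
        exact P3 (j+2) (by omega)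
  · -- Case 2 : [a]++d = u ++ z ++ [!f] ++ t,  e++[!b] = u ++ [c] ++ z ++ t
    set z : List Bool := (!c) :: (v ++ [f]) with hzdef
    have hzlen : z.length = v.length + 2 := by
      rw [hzdef]; simp only [List.length_cons, List.length_append, List.length_singleton, List.length_nil]
    have U : ∀ i, i < u.length →
        ([a] ++ d).getD i false = (e ++ [!b]).getD i false := by
      intro i hi
      rw [hA, hB2, getD_app_lt u (z ++ ([!f] ++ t)) i hi,
        getD_app_lt u ([c] ++ (z ++ t)) i hi]
    have AZ : ∀ r, r < z.length →
        ([a] ++ d).getD (u.length + r) false = z.getD r false := by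
      intro r hr
      rw [hA, getD_app_ge u (z ++ ([!f] ++ t)) r, getD_app_lt z ([!f] ++ t) r hr]
    have BZ : ∀ r, r < z.length →
        (e ++ [!b]).getD (u.length + (1 + r)) false = z.getD r false := by
      intro r hr
      rw [hB2, getD_app_ge u ([c] ++ (z ++ t)) (1 + r)]
      have e1 := getD_app_ge [c] (z ++ t) r
      rw [List.length_singleton] at e1
      rw [e1, getD_app_lt z t r hr]
    have AT : ∀ s, ([a] ++ d).getD (u.length + (z.length + (1 + s))) false
        = t.getD s false := by
      intro s
      rw [hA, getD_app_ge u (z ++ ([!f] ++ t)) (z.length + (1 + s)),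
        getD_app_ge z ([!f] ++ t) (1 + s)]
      have e1 := getD_app_ge [!f] t s
      rw [List.length_singleton] at e1
      rw [e1]
    have BT : ∀ s, (e ++ [!b]).getD (u.length + (1 + (z.length + s))) false
        = t.getD s false := by
      intro s
      rw [hB2, getD_app_ge u ([c] ++ (z ++ t)) (1 + (z.length + s))]
      have e1 := getD_app_ge [c] (z ++ t) (z.length + s)
      rw [List.length_singleton] at e1
      rw [e1, getD_app_ge z t s]
    refine KEY 3 (u.length + v.length + 4) (by norm_num) (by norm_num) (by omega)
      (by omega) ?_ ?_ ?_
    · -- UX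
      intro j hj hg
      rcases hg with hg | hg
      · have hdn : j < d.length := by omega
        have hdn2 : j + 1 < d.length := by omega
        rw [← PA j hdn, U (j+1) (by omega), PB (j+1) hdn2]
        exact P1 (j+2) hg
      · have hdn : j < d.length := by omega
        have hdn2 : j + 1 < d.length := by omega
        rw [← PA j hdn, U (j+1) (by omega), PB (j+1) hdn2]
        exact P3 (j+2) (by omega)
    · -- M (period 3)
      intro j hj hj2 hg
      have hr : j + 1 - u.length < z.length := by omega
      have hZA := AZ (j + 1 - u.length) hr
      have hZB := BZ (j + 1 - u.length) hr
      rw [show u.length + (j + 1 - u.length) = j + 1 by omega] at hZA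
      rw [show u.length + (1 + (j + 1 - u.length)) = j + 2 by omega] at hZB
      rcases hg with hg | hg
      · have hdn : j < d.length := by omega
        have hdn2 : j + 2 < d.length := by omega
        rw [← PA j hdn, hZA, ← hZB, PB (j+2) hdn2]
        exact P1 (j+3) hg
      · have hdn : j < d.length := by omega
        have hdn2 : j + 2 < d.length := by omega
        rw [← PA j hdn, hZA, ← hZB, PB (j+2) hdn2]
        exact P3 (j+3) (by omega)
    · -- TX
      intro j hj hg
      have hT1 := AT (j - (u.length + z.length))
      have hT2 := BT (j - (u.length + z.length))
      rw [show u.length + (z.length + (1 + (j - (u.length + z.length)))) = j + 1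
        by omega] at hT1
      rw [show u.length + (1 + (z.length + (j - (u.length + z.length)))) = j + 1
        by omega] at hT2
      rcases hg with hg | hg
      · have hdn : j < d.length := by omega
        have hdn2 : j + 1 < d.length := by omega
        rw [← PA j hdn, hT1, ← hT2, PB (j+1) hdn2]
        exact P1 (j+2) hg
      · have hdn : j < d.length := by omega
        have hdn2 : j + 1 < d.length := by omega
        rw [← PA j hdn, hT1, ← hT2, PB (j+1) hdn2]
        exact P3 (j+2) (by omega)
end

section
/- Let n ≥ 3, t ≥ 2, and let x, y ∈ {0,1}^n satisfy |I_1(x) ∩ I_1(y)| = 1. Then |I_t(x) ∩ I_t(y)| ≤ Σ_{i=0}^{t−1} C(n+t, i) + Σ_{i=0}^{t−2} C(n+t−2, i)·(1 − (−1)^{t−1−i}), where C(·,·) denotes the binomial coefficient. -/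
open List

namespace Stmt18Aux

/-- All binary lists of length `m`. -/
def allB : ℕ → Finset (List Bool)
  | 0 => {([] : List Bool)}
  | m + 1 => (allB m).biUnion fun l => {false :: l, true :: l}

lemma mem_allB : ∀ {m : ℕ} {z : List Bool}, z ∈ allB m ↔ z.length = m := by
  intro m
  induction m with
  | zero => intro z; simp [allB, List.length_eq_zero_iff]
  | succ m ih =>
    intro z
    cases z with
    | nil => simp [allB]
    | cons c w =>
      simp only [allB, Finset.mem_biUnion, Finset.mem_insert, Finset.mem_singleton]
      constructor
      · rintro ⟨l, hl, (h | h)⟩ <;> rw [h] <;> simp [ih.mp hl]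
      · intro hlen
        refine ⟨w, ih.mpr (by simpa using hlen), ?_⟩
        cases c
        · left; rfl
        · right; rfl

/-- Common supersequences of `x` and `y` of length `m`. -/
def CSF (x y : List Bool) (m : ℕ) : Finset (List Bool) :=
  (allB m).filter fun z => x <+ z ∧ y <+ z

lemma mem_CSF {x y z : List Bool} {m : ℕ} :
    z ∈ CSF x y m ↔ z.length = m ∧ x <+ z ∧ y <+ z := by
  simp [CSF, mem_allB]

def strip (c : Bool) : List Bool → List Bool
  | [] => []
  | d :: l => if d = c then l else d :: l

@[simp] lemma strip_nil (c : Bool) : strip c [] = [] := rfl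

@[simp] lemma strip_cons_same (c : Bool) (l : List Bool) : strip c (c :: l) = l := by
  simp [strip]

lemma strip_cons_ne {c d : Bool} (h : d ≠ c) (l : List Bool) : strip c (d :: l) = d :: l := by
  simp [strip, h]

lemma sublist_cons_iff_strip (c : Bool) (x w : List Bool) :
    x <+ c :: w ↔ strip c x <+ w := by
  cases x with
  | nil => simp
  | cons d l =>
    by_cases hdc : d = c
    · subst hdc
      rw [strip_cons_same]
      exact List.cons_sublist_cons
    · rw [strip_cons_ne hdc]
      constructor
      · intro h; exact h.of_cons_of_ne hdc
      · exact fun h => h.cons c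

lemma CSF_succ (x y : List Bool) (m : ℕ) :
    CSF x y (m + 1) =
      (CSF (strip false x) (strip false y) m).image (List.cons false) ∪
      (CSF (strip true x) (strip true y) m).image (List.cons true) := by
  ext z
  simp only [mem_CSF, Finset.mem_union, Finset.mem_image]
  constructor
  · rintro ⟨hlen, hx, hy⟩
    cases z with
    | nil => simp at hlen
    | cons c w =>
      have hw : w.length = m := by simpa using hlen
      cases c
      · exact Or.inl ⟨w, ⟨hw, (sublist_cons_iff_strip false x w).mp hx,
          (sublist_cons_iff_strip false y w).mp hy⟩, rfl⟩
      · exact Or.inr ⟨w, ⟨hw, (sublist_cons_iff_strip true x w).mp hx,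
          (sublist_cons_iff_strip true y w).mp hy⟩, rfl⟩
  · rintro (⟨w, hw, rfl⟩ | ⟨w, hw, rfl⟩) <;>
    · obtain ⟨hw1, hw2, hw3⟩ := hw
      exact ⟨by simp [hw1], (sublist_cons_iff_strip _ _ _).mpr hw2,
        (sublist_cons_iff_strip _ _ _).mpr hw3⟩

lemma CSF_card_succ (x y : List Bool) (m : ℕ) :
    (CSF x y (m + 1)).card =
      (CSF (strip false x) (strip false y) m).card +
      (CSF (strip true x) (strip true y) m).card := by
  have hdisj : Disjoint ((CSF (strip false x) (strip false y) m).image (List.cons false))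
      ((CSF (strip true x) (strip true y) m).image (List.cons true)) := by
    rw [Finset.disjoint_left]
    rintro z hz1 hz2
    obtain ⟨w1, _, rfl⟩ := Finset.mem_image.mp hz1
    obtain ⟨w2, _, h⟩ := Finset.mem_image.mp hz2
    simp at h
  rw [CSF_succ, Finset.card_union_of_disjoint hdisj,
    Finset.card_image_of_injective _ List.cons_injective,
    Finset.card_image_of_injective _ List.cons_injective]

lemma CSF_card_succ_same (a : Bool) (x y : List Bool) (m : ℕ) :
    (CSF (a :: x) (a :: y) (m + 1)).card =
      (CSF x y m).card + (CSF (a :: x) (a :: y) m).card := by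
  rw [CSF_card_succ]
  cases a
  · rw [strip_cons_same, strip_cons_same, strip_cons_ne (by decide), strip_cons_ne (by decide)]
  · rw [strip_cons_same, strip_cons_same, strip_cons_ne (by decide), strip_cons_ne (by decide),
      Nat.add_comm]

lemma CSF_card_succ_diff {a b : Bool} (hab : a ≠ b) (x y : List Bool) (m : ℕ) :
    (CSF (a :: x) (b :: y) (m + 1)).card =
      (CSF x (b :: y) m).card + (CSF (a :: x) y m).card := by
  cases a <;> cases b
  · exact absurd rfl hab
  · rw [CSF_card_succ, strip_cons_same, strip_cons_ne (by decide),
      strip_cons_ne (by decide), strip_cons_same]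
  · rw [CSF_card_succ, strip_cons_ne (by decide), strip_cons_same,
      strip_cons_same, strip_cons_ne (by decide), Nat.add_comm]
  · exact absurd rfl hab

lemma CSF_comm (x y : List Bool) (m : ℕ) : CSF x y m = CSF y x m := by
  ext z; simp only [mem_CSF]; tauto

lemma CSF_card_of_len_lt {x : List Bool} {m : ℕ} (h : m < x.length) (y : List Bool) :
    (CSF x y m).card = 0 := by
  rw [Finset.card_eq_zero, Finset.eq_empty_iff_forall_notMem]
  intro z hz
  obtain ⟨h1, h2, _⟩ := mem_CSF.mp hz
  have := h2.length_le
  omega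

lemma CSF_card_of_len_eq {x y : List Bool} {m : ℕ} (h : y.length = m) :
    (CSF x y m).card = if x <+ y then 1 else 0 := by
  split_ifs with hxy
  · rw [Finset.card_eq_one]
    refine ⟨y, ?_⟩
    ext z
    simp only [mem_CSF, Finset.mem_singleton]
    constructor
    · rintro ⟨h1, _, h3⟩
      exact (h3.eq_of_length (by omega)).symm
    · rintro rfl
      exact ⟨h, hxy, Sublist.refl _⟩
  · rw [Finset.card_eq_zero, Finset.eq_empty_iff_forall_notMem]
    intro z hz
    obtain ⟨h1, h2, h3⟩ := mem_CSF.mp hz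
    have hzy : y = z := h3.eq_of_length (by omega)
    exact hxy (hzy ▸ h2)

lemma CSF_card_of_nsub {p q : List Bool} {m : ℕ} (hpm : p.length = m) (h : ¬ q <+ p) :
    (CSF p q m).card = 0 := by
  rw [CSF_comm, CSF_card_of_len_eq hpm, if_neg h]

/-- `v <+ u` makes the second constraint redundant. -/
lemma CSF_of_sublist {u v : List Bool} (h : v <+ u) (m : ℕ) :
    CSF u v m = CSF u [] m := by
  ext z
  simp only [mem_CSF]
  constructor
  · rintro ⟨h1, h2, _⟩; exact ⟨h1, h2, nil_sublist z⟩
  · rintro ⟨h1, h2, _⟩; exact ⟨h1, h2, h.trans h2⟩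

end Stmt18Aux

namespace Stmt18Aux2

/-- Ball-size function: number of length-`m` supersequences of a length-`l` word. -/
def Sb (l m : ℕ) : ℕ := if l ≤ m then ∑ i ∈ Finset.range (m - l + 1), m.choose i else 0

lemma sum_choose_succ (M k : ℕ) :
    ∑ i ∈ Finset.range (k + 1), (M + 1).choose i =
      ∑ i ∈ Finset.range (k + 1), M.choose i + ∑ i ∈ Finset.range k, M.choose i := by
  induction k with
  | zero => simp
  | succ k ih =>
    rw [Finset.sum_range_succ (fun i => (M + 1).choose i) (k + 1), ih,
      Nat.choose_succ_succ,
      Finset.sum_range_succ (fun i => M.choose i) (k + 1),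
      Finset.sum_range_succ (fun i => M.choose i) k]
    ring

lemma Sb_pascal (l m : ℕ) : Sb (l + 1) (m + 1) = Sb l m + Sb (l + 1) m := by
  rcases lt_trichotomy l m with hlt | rfl | hgt
  · rw [Sb, if_pos (by omega), Sb, if_pos (by omega), Sb, if_pos (by omega)]
    have e1 : m + 1 - (l + 1) + 1 = (m - l) + 1 := by omega
    have e2 : m - l + 1 = (m - l) + 1 := rfl
    have e3 : m - (l + 1) + 1 = m - l := by omega
    rw [e1, e2, e3]
    exact sum_choose_succ m (m - l)
  · rw [Sb, if_pos (by omega), Sb, if_pos (by omega), Sb, if_neg (by omega)]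
    have e1 : l + 1 - (l + 1) + 1 = 1 := by omega
    have e2 : l - l + 1 = 1 := by omega
    rw [e1, e2]
    simp
  · rw [Sb, if_neg (by omega), Sb, if_neg (by omega), Sb, if_neg (by omega)]

lemma Sb_self (l : ℕ) : Sb l l = 1 := by
  rw [Sb, if_pos le_rfl]
  have : l - l + 1 = 1 := by omega
  rw [this]
  simp

lemma Sb_zero_left (k : ℕ) : Sb 0 k = 2 ^ k := by
  rw [Sb, if_pos (Nat.zero_le _)]
  simpa using Nat.sum_range_choose k

end Stmt18Aux2
namespace Stmt18Aux

open Stmt18Aux2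

lemma CSF_nil_card : ∀ (m : ℕ) (x : List Bool), (CSF x [] m).card = Sb x.length m := by
  intro m
  induction m with
  | zero =>
    intro x
    rw [CSF_card_of_len_eq (by rfl)]
    cases x with
    | nil => simp [Sb]
    | cons a l =>
      rw [if_neg (by simp), Sb, if_neg (by simp)]
  | succ m ih =>
    intro x
    rw [CSF_card_succ]
    cases x with
    | nil =>
      simp only [strip_nil]
      rw [ih [], List.length_nil, Sb_zero_left, Sb_zero_left]
      ring
    | cons a l =>
      simp only [strip_nil]
      cases a
      · rw [strip_cons_same, strip_cons_ne (by decide), ih l, ih (false :: l)]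
        simp only [List.length_cons]
        exact (Sb_pascal l.length m).symm
      · rw [strip_cons_ne (by decide), strip_cons_same, ih l, ih (true :: l)]
        simp only [List.length_cons]
        rw [Nat.add_comm]
        exact (Sb_pascal l.length m).symm

lemma CSF_card_le_left (x y : List Bool) (m : ℕ) : (CSF x y m).card ≤ Sb x.length m := by
  rw [← CSF_nil_card m x]
  apply Finset.card_le_card
  intro z hz
  obtain ⟨h1, h2, _⟩ := mem_CSF.mp hz
  exact mem_CSF.mpr ⟨h1, h2, nil_sublist z⟩

lemma CSF_card_le_right (x y : List Bool) (m : ℕ) : (CSF x y m).card ≤ Sb y.length m := by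
  rw [CSF_comm]; exact CSF_card_le_left y x m

/-- Maximal intersection bound for distinct equal-length words. -/
lemma keymax : ∀ (m : ℕ) (x y : List Bool), x ≠ y → x.length = y.length →
    (CSF x y m).card ≤ 2 * Sb x.length (m - 1) := by
  intro m
  induction m with
  | zero =>
    intro x y hne hlen
    have hpos : 0 < x.length := by
      cases x with
      | nil =>
        cases y with
        | nil => exact absurd rfl hne
        | cons b y' => simp at hlen
      | cons a x' => simp
    rw [CSF_card_of_len_lt hpos y]
    exact Nat.zero_le _
  | succ m ih =>
    intro x y hne hlen
    obtain ⟨a, x', rfl⟩ : ∃ a x', x = a :: x' := by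
      cases x with
      | nil =>
        cases y with
        | nil => exact absurd rfl hne
        | cons b y' => simp at hlen
      | cons a x' => exact ⟨a, x', rfl⟩
    obtain ⟨b, y', rfl⟩ : ∃ b y', y = b :: y' := by
      cases y with
      | nil => simp at hlen
      | cons b y' => exact ⟨b, y', rfl⟩
    simp only [Nat.add_sub_cancel]
    by_cases hab : a = b
    · subst hab
      have hne' : x' ≠ y' := fun h => hne (by rw [h])
      have hlen' : x'.length = y'.length := by simpa using hlen
      rcases Nat.eq_zero_or_pos m with rfl | hm
      · have hpos' : 0 < x'.length := by
          cases x' with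
          | nil =>
            cases y' with
            | nil => exact absurd rfl hne'
            | cons c y'' => simp at hlen'
          | cons c x'' => simp
        rw [CSF_card_of_len_lt (by simp; omega) (a :: y')]
        exact Nat.zero_le _
      · obtain ⟨m', rfl⟩ : ∃ m', m = m' + 1 := ⟨m - 1, by omega⟩
        rw [CSF_card_succ_same]
        have h1 := ih x' y' hne' hlen'
        have h2 := ih (a :: x') (a :: y') hne (by simpa using hlen)
        have hp := Sb_pascal x'.length m'
        simp only [Nat.add_sub_cancel] at h1 h2
        simp only [List.length_cons] at h1 h2 ⊢
        omega
    · rw [CSF_card_succ_diff hab]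
      have h1 : (CSF x' (b :: y') m).card ≤ Sb (b :: y').length m :=
        CSF_card_le_right _ _ _
      have h2 : (CSF (a :: x') y' m).card ≤ Sb (a :: x').length m :=
        CSF_card_le_left _ _ _
      rw [← hlen] at h1
      omega

/-- Key bound for gap-one noncomparable pairs. -/
lemma key1 : ∀ (m : ℕ) (p q : List Bool), p.length = q.length + 1 → ¬ q <+ p →
    (CSF p q m).card ≤ Sb (p.length + 1) m + 2 * Sb (p.length - 1) (m - 2) := by
  intro m
  induction m with
  | zero =>
    intro p q hlen _
    rw [CSF_card_of_len_lt (by omega) q]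
    exact Nat.zero_le _
  | succ m ih =>
    intro p q hlen hnsub
    have hq : q ≠ [] := by rintro rfl; exact hnsub (nil_sublist p)
    obtain ⟨b, q', rfl⟩ := List.exists_cons_of_ne_nil hq
    have hpne : p ≠ [] := by rintro rfl; simp at hlen
    obtain ⟨a, p', rfl⟩ := List.exists_cons_of_ne_nil hpne
    have hp' : p'.length = q'.length + 1 := by simpa using hlen
    by_cases hab : a = b
    · subst hab
      have hnsub' : ¬ q' <+ p' := fun h => hnsub (h.cons_cons a)
      by_cases hsmall : m + 1 < p'.length + 1
      · rw [CSF_card_of_len_lt (by simpa using hsmall) (a :: q')]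
        exact Nat.zero_le _
      · by_cases hsmall2 : m + 1 = p'.length + 1
        · rw [CSF_card_of_nsub (by simpa using hsmall2.symm) hnsub]
          exact Nat.zero_le _
        · -- m ≥ p'.length + 1 ≥ 2
          obtain ⟨m2, rfl⟩ : ∃ m2, m = m2 + 2 := ⟨m - 2, by omega⟩
          rw [CSF_card_succ_same]
          have h1 := ih p' q' hp' hnsub'
          have h2 := ih (a :: p') (a :: q') hlen hnsub
          obtain ⟨L, hL⟩ : ∃ L, p'.length = L + 1 := ⟨q'.length, hp'⟩
          simp only [List.length_cons] at h2 ⊢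
          rw [hL] at h1 h2 ⊢
          rw [(by omega : m2 + 2 - 2 = m2)] at h1 h2
          rw [(by omega : L + 1 - 1 = L)] at h1
          rw [(by omega : L + 1 + 1 - 1 = L + 1)] at h2
          rw [(by omega : m2 + 2 + 1 - 2 = m2 + 1), (by omega : L + 1 + 1 - 1 = L + 1)]
          have hpas1 := Sb_pascal (L + 1 + 1) (m2 + 2)
          have hpas2 := Sb_pascal L m2
          omega
    · rw [CSF_card_succ_diff hab]
      have hne2 : p' ≠ b :: q' := by
        rintro h
        exact hnsub (h ▸ (List.sublist_cons_self a p'))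
      have h1 : (CSF p' (b :: q') m).card ≤ 2 * Sb p'.length (m - 1) :=
        keymax m p' (b :: q') hne2 (by simp [hp'])
      have h2 : (CSF (a :: p') q' m).card ≤ Sb (a :: p').length m :=
        CSF_card_le_left _ _ _
      have hpas := Sb_pascal (p'.length + 1) m
      have e1 : (a :: p').length = p'.length + 1 := by simp
      rw [e1] at h2 ⊢
      rw [(by omega : m + 1 - 2 = m - 1), (by omega : p'.length + 1 - 1 = p'.length)]
      omega

end Stmt18Aux
namespace Stmt18Aux

open Stmt18Aux2

/-- Main bound: equal-length pair with a unique common supersequence of length `n+1`. -/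
lemma top : ∀ (K m n : ℕ) (x y : List Bool), m + n ≤ K → x ≠ y → x.length = n →
    y.length = n → (CSF x y (n + 1)).card = 1 →
    (CSF x y m).card ≤ Sb (n + 1) m + 2 * Sb (n - 1) (m - 3) := by
  intro K
  induction K with
  | zero =>
    intro m n x y hK hne hx hy _
    exfalso
    have hn : n = 0 := by omega
    subst hn
    rw [List.length_eq_zero_iff] at hx hy
    exact hne (hx.trans hy.symm)
  | succ K ih =>
    intro m n x y hK hne hx hy h1
    have hn : 0 < n := by
      rcases Nat.eq_zero_or_pos n with rfl | h
      · rw [List.length_eq_zero_iff] at hx hy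
        exact absurd (hx.trans hy.symm) hne
      · exact h
    rcases lt_trichotomy m (n + 1) with hm | hm | hm
    · rcases Nat.lt_or_ge m n with hmn | hmn
      · rw [CSF_card_of_len_lt (by omega) y]
        exact Nat.zero_le _
      · have hmn' : n = m := by omega
        subst hmn'
        have hnsub : ¬ y <+ x := by
          intro hsub
          exact hne ((hsub.eq_of_length (by omega)).symm)
        rw [CSF_card_of_nsub hx hnsub]
        exact Nat.zero_le _
    · rw [hm, h1]
      have := Sb_self (n + 1)
      omega
    · obtain ⟨M, rfl⟩ : ∃ M, m = M + 1 := ⟨m - 1, by omega⟩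
      have hM : n + 1 ≤ M := by omega
      have hxne : x ≠ [] := by rintro rfl; simp at hx; omega
      have hyne : y ≠ [] := by rintro rfl; simp at hy; omega
      obtain ⟨a, x', rfl⟩ := List.exists_cons_of_ne_nil hxne
      obtain ⟨b, y', rfl⟩ := List.exists_cons_of_ne_nil hyne
      by_cases hab : a = b
      · subst hab
        have hne' : x' ≠ y' := fun h => hne (by rw [h])
        have hx' : x'.length = n - 1 := by simp at hx; omega
        have hy' : y'.length = n - 1 := by simp at hy; omega
        have hn2 : 2 ≤ n := by
          by_contra h2
          have hx0 : x'.length = 0 := by omega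
          have hy0 : y'.length = 0 := by omega
          rw [List.length_eq_zero_iff] at hx0 hy0
          exact hne' (hx0.trans hy0.symm)
        -- uniqueness descends
        obtain ⟨n', rfl⟩ : ∃ n', n = n' + 1 := ⟨n - 1, by omega⟩
        have h1' : (CSF x' y' (n' + 1)).card = 1 := by
          have hsplit := CSF_card_succ_same a x' y' (n' + 1)
          -- (CSF (a::x')(a::y') (n'+2)).card = (CSF x' y' (n'+1)).card + (CSF (a::x')(a::y') (n'+1)).card
          have hz : (CSF (a :: x') (a :: y') (n' + 1)).card = 0 := by
            apply CSF_card_of_nsub (by simpa using hx)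
            intro hsub
            exact hne ((hsub.eq_of_length (by simp; omega)).symm)
          omega
        obtain ⟨n2, rfl⟩ : ∃ n2, n' = n2 + 1 := ⟨n' - 1, by omega⟩
        obtain ⟨M3, rfl⟩ : ∃ M3, M = M3 + 3 := ⟨M - 3, by omega⟩
        have hc1 := ih (M3 + 3) (n2 + 1) x' y' (by omega) hne' (by omega) (by omega) h1'
        have hc2 := ih (M3 + 3) (n2 + 1 + 1) (a :: x') (a :: y') (by omega) hne hx hy h1
        rw [CSF_card_succ_same]
        rw [(by omega : n2 + 1 - 1 = n2), (by omega : M3 + 3 - 3 = M3)] at hc1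
        rw [(by omega : n2 + 1 + 1 - 1 = n2 + 1), (by omega : M3 + 3 - 3 = M3)] at hc2
        rw [(by omega : n2 + 1 + 1 - 1 = n2 + 1), (by omega : M3 + 3 + 1 - 3 = M3 + 1)]
        have hpas1 := Sb_pascal (n2 + 1 + 1) (M3 + 3)
        have hpas2 := Sb_pascal n2 M3
        omega
      · -- heads differ: exactly one comparability
        have hu := CSF_card_succ_diff hab x' y' n
        have c1 : (CSF x' (b :: y') n).card = if x' <+ b :: y' then 1 else 0 :=
          CSF_card_of_len_eq hy
        have c2 : (CSF (a :: x') y' n).card = if y' <+ a :: x' then 1 else 0 := by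
          rw [CSF_comm]
          exact CSF_card_of_len_eq hx
        rw [hu, c1, c2] at h1
        rw [CSF_card_succ_diff hab]
        by_cases hxy1 : x' <+ b :: y'
        · have hxy2 : ¬ y' <+ a :: x' := by
            intro hsub
            rw [if_pos hxy1, if_pos hsub] at h1
            omega
          -- child1 is comparable: CSF x' (b::y') M = ball (b::y')
          have e1 : (CSF x' (b :: y') M).card = Sb n M := by
            rw [CSF_comm, CSF_of_sublist hxy1, CSF_nil_card]
            rw [show (b :: y').length = n from hy]
          -- child2: key1 with p := a::x', q := y'
          have e2 : (CSF (a :: x') y' M).card ≤ Sb (n + 1) M + 2 * Sb (n - 1) (M - 2) := by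
            have := key1 M (a :: x') y' (by simp at hx hy ⊢; omega) hxy2
            rw [show (a :: x').length = n from hx] at this
            exact this
          have hpas1 := Sb_pascal n M
          rw [(by omega : M + 1 - 3 = M - 2)]
          omega
        · have hxy2 : y' <+ a :: x' := by
            by_contra hsub
            rw [if_neg hxy1, if_neg hsub] at h1
            omega
          have e1 : (CSF (a :: x') y' M).card = Sb n M := by
            rw [CSF_of_sublist hxy2, CSF_nil_card]
            rw [show (a :: x').length = n from hx]
          have e2 : (CSF x' (b :: y') M).card ≤ Sb (n + 1) M + 2 * Sb (n - 1) (M - 2) := by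
            have := key1 M (b :: y') x' (by simp at hx hy ⊢; omega) hxy1
            rw [show (b :: y').length = n from hy] at this
            rw [CSF_comm]
            exact this
          have hpas1 := Sb_pascal n M
          rw [(by omega : M + 1 - 3 = M - 2)]
          omega

end Stmt18Aux
namespace Stmt18Aux

open Stmt18Aux2

lemma intid : ∀ (j M : ℕ), 1 ≤ M →
    (∑ i ∈ Finset.range j, ((M.choose i : ℤ) * (1 - (-1 : ℤ) ^ (j - i)))) =
      2 * ∑ i ∈ Finset.range j, (((M - 1).choose i : ℤ)) := by
  intro j
  induction j with
  | zero => intro M _; simp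
  | succ j ih =>
    intro M hM
    rw [Finset.sum_range_succ]
    have hlast : ((M.choose j : ℤ) * (1 - (-1 : ℤ) ^ (j + 1 - j))) = 2 * M.choose j := by
      rw [(by omega : j + 1 - j = 1)]
      ring
    have hhead : ∑ i ∈ Finset.range j, ((M.choose i : ℤ) * (1 - (-1 : ℤ) ^ (j + 1 - i)))
        = 2 * (∑ i ∈ Finset.range j, (M.choose i : ℤ)) -
          ∑ i ∈ Finset.range j, ((M.choose i : ℤ) * (1 - (-1 : ℤ) ^ (j - i))) := by
      rw [Finset.mul_sum, ← Finset.sum_sub_distrib]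
      apply Finset.sum_congr rfl
      intro i hi
      have hij : i < j := Finset.mem_range.mp hi
      rw [(by omega : j + 1 - i = (j - i) + 1), pow_succ]
      ring
    rw [hhead, hlast, ih M hM]
    rw [Finset.sum_range_succ (fun i => (((M - 1).choose i : ℤ))) j]
    have hs := sum_choose_succ (M - 1) j
    rw [(by omega : M - 1 + 1 = M)] at hs
    have hs' : (∑ i ∈ Finset.range (j + 1), (M.choose i : ℤ)) =
        ∑ i ∈ Finset.range (j + 1), ((M - 1).choose i : ℤ) +
          ∑ i ∈ Finset.range j, ((M - 1).choose i : ℤ) := by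
      exact_mod_cast hs
    rw [Finset.sum_range_succ (fun i => ((M.choose i : ℤ))) j,
      Finset.sum_range_succ (fun i => (((M - 1).choose i : ℤ))) j] at hs'
    linarith

end Stmt18Aux

theorem stmt18' (n t : ℕ) (hn : 3 ≤ n) (ht : 2 ≤ t) (x y : List Bool)
    (hx : x.length = n) (hy : y.length = n)
    (h : ({z | z.length = x.length + 1 ∧ x.Sublist z} ∩ {z | z.length = y.length + 1 ∧ y.Sublist z}).ncard = 1) :
    (({z | z.length = x.length + t ∧ x.Sublist z} ∩ {z | z.length = y.length + t ∧ y.Sublist z}).ncard : ℤ) ≤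
      (∑ i ∈ Finset.range t, ((n + t).choose i : ℤ)) +
      (∑ i ∈ Finset.range (t - 1),
        ((n + t - 2).choose i : ℤ) * (1 - (-1 : ℤ)^(t - 1 - i))) := by
  classical
  open Stmt18Aux Stmt18Aux2 in
  have hset : ∀ s : ℕ, ({z | z.length = x.length + s ∧ x.Sublist z} ∩ {z | z.length = y.length + s ∧ y.Sublist z} : Set (List Bool)) = ↑(CSF x y (n + s)) := by
    intro s
    ext z
    simp only [Set.mem_inter_iff, Set.mem_setOf_eq, Finset.coe_filter, CSF, mem_allB,
      Set.mem_setOf_eq, hx, hy]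
    constructor
    · rintro ⟨⟨h1, h2⟩, ⟨h3, h4⟩⟩
      exact ⟨h1, h2, h4⟩
    · rintro ⟨h1, h2, h3⟩
      exact ⟨⟨h1, h2⟩, ⟨h1, h3⟩⟩
  have h1 : (Stmt18Aux.CSF x y (n + 1)).card = 1 := by
    rw [hset 1, Set.ncard_coe_finset] at h
    exact h
  have hne : x ≠ y := by
    rintro rfl
    rw [Stmt18Aux.CSF_of_sublist (List.Sublist.refl x), Stmt18Aux.CSF_nil_card, hx] at h1
    have hv : Stmt18Aux2.Sb n (n + 1) = n + 2 := by
      rw [Stmt18Aux2.Sb, if_pos (by omega), (by omega : n + 1 - n + 1 = 2)]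
      rw [Finset.sum_range_succ, Finset.sum_range_one]
      simp [Nat.choose_one_right]
      omega
    omega
  have key := Stmt18Aux.top (n + t + n) (n + t) n x y le_rfl hne hx hy h1
  rw [hset t, Set.ncard_coe_finset]
  have hA : Stmt18Aux2.Sb (n + 1) (n + t) = ∑ i ∈ Finset.range t, (n + t).choose i := by
    rw [Stmt18Aux2.Sb, if_pos (by omega), (by omega : n + t - (n + 1) + 1 = t)]
  have hB : Stmt18Aux2.Sb (n - 1) (n + t - 3) = ∑ i ∈ Finset.range (t - 1), (n + t - 3).choose i := by
    rw [Stmt18Aux2.Sb, if_pos (by omega), (by omega : n + t - 3 - (n - 1) + 1 = t - 1)]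
  have hC : (∑ i ∈ Finset.range (t - 1), ((n + t - 2).choose i : ℤ) * (1 - (-1 : ℤ) ^ (t - 1 - i)))
      = 2 * ∑ i ∈ Finset.range (t - 1), ((n + t - 3).choose i : ℤ) := by
    have := Stmt18Aux.intid (t - 1) (n + t - 2) (by omega)
    rw [(by omega : n + t - 2 - 1 = n + t - 3)] at this
    exact this
  have final : ((Stmt18Aux.CSF x y (n + t)).card : ℤ) ≤
      (∑ i ∈ Finset.range t, ((n + t).choose i : ℤ)) +
        2 * (∑ i ∈ Finset.range (t - 1), ((n + t - 3).choose i : ℤ)) := by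
    calc ((Stmt18Aux.CSF x y (n + t)).card : ℤ)
        ≤ ((Stmt18Aux2.Sb (n + 1) (n + t) + 2 * Stmt18Aux2.Sb (n - 1) ((n + t) - 3) : ℕ) : ℤ) := by
          exact_mod_cast key
      _ = _ := by rw [hA, hB]; push_cast; ring
  rw [hC]
  exact final

theorem stmt18 (n t : ℕ) (hn : 3 ≤ n) (ht : 2 ≤ t) (x y : List Bool)
    (hx : x.length = n) (hy : y.length = n)
    (h : (insBall 1 x ∩ insBall 1 y).ncard = 1) :
    ((insBall t x ∩ insBall t y).ncard : ℤ) ≤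
      (∑ i ∈ Finset.range t, ((n + t).choose i : ℤ)) +
      (∑ i ∈ Finset.range (t - 1),
        ((n + t - 2).choose i : ℤ) * (1 - (-1 : ℤ)^(t - 1 - i))) := by
  exact stmt18' n t hn ht x y hx hy h
end

section
/- Let n ≥ 3, a, b ∈ {0,1}, v ∈ {0,1}^{n−3}, and set x = a ā v b and y = ā v b b̄ (so x, y ∈ {0,1}^n). Suppose I_1(x) ∩ I_1(y) = {z} is a singleton. Then for every t ≥ 2, |I_t(x) ∩ I_t(y)| ≤ |I_{t−1}(z)| + N⁺(n−1, t−1), where N⁺(m, s) = Σ_{i=0}^{s−1} C(m+s, i)·(1 − (−1)^{s−i}) and C(·,·) denotes the binomial coefficient. -/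
open List

namespace Stmt19Aux

/-- partial binomial sum: `∑_{i ≤ l - q} C(l, i)`. -/
def Bfun (l q : ℕ) : ℕ := ∑ i ∈ Finset.range (l - q + 1), l.choose i

lemma Bfun_pos (l q : ℕ) : 1 ≤ Bfun l q := by
  have h0 : (0:ℕ) ∈ Finset.range (l - q + 1) := by simp
  calc (1:ℕ) = l.choose 0 := by simp
    _ ≤ _ := Finset.single_le_sum (f := fun i => l.choose i) (fun i _ => Nat.zero_le _) h0

lemma Bfun_self (k : ℕ) : Bfun k k = 1 := by
  unfold Bfun
  simp [Nat.sub_self]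

lemma sum_choose_pascal (l : ℕ) : ∀ d : ℕ, ∑ i ∈ Finset.range (d+1), (l+1).choose i
    = ∑ i ∈ Finset.range (d+1), l.choose i + ∑ i ∈ Finset.range d, l.choose i := by
  intro d
  induction d with
  | zero => simp
  | succ d ih =>
      rw [Finset.sum_range_succ, ih]
      simp only [Finset.sum_range_succ, Nat.choose_succ_succ']
      omega

lemma Bfun_pascal {l q : ℕ} (h1 : 1 ≤ q) (h2 : q ≤ l) :
    Bfun (l+1) q = Bfun l (q-1) + Bfun l q := by
  have e1 : l + 1 - q + 1 = (l - q + 1) + 1 := by omega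
  have e2 : l - (q-1) + 1 = (l - q + 1) + 1 := by omega
  unfold Bfun
  rw [e1, e2, sum_choose_pascal l (l - q + 1)]

lemma finite_of_len (S : Set (List Bool)) {k : ℕ} (h : ∀ w ∈ S, w.length = k) : S.Finite :=
  (List.finite_length_eq Bool k).subset (fun w hw => h w hw)

lemma eq_cons_of_head? {w : List Bool} {σ : Bool} (h : w.head? = some σ) : w = σ :: w.tail := by
  cases w with
  | nil => simp at h
  | cons c w' =>
      simp only [List.head?_cons, Option.some.injEq] at h
      simp [h]

lemma head_split (S : Set (List Bool)) {k : ℕ} (hS : ∀ w ∈ S, w.length = k + 1) :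
    S.ncard ≤ (List.tail '' {w | w ∈ S ∧ w.head? = some false}).ncard
            + (List.tail '' {w | w ∈ S ∧ w.head? = some true}).ncard := by
  have hfin : S.Finite := finite_of_len S hS
  have hsub : S ⊆ {w | w ∈ S ∧ w.head? = some false} ∪ {w | w ∈ S ∧ w.head? = some true} := by
    intro w hw
    have hlen := hS w hw
    cases w with
    | nil => simp at hlen
    | cons c w' =>
        cases c
        · exact Or.inl ⟨hw, rfl⟩
        · exact Or.inr ⟨hw, rfl⟩
  have hinj : ∀ σ : Bool, Set.InjOn List.tail {w | w ∈ S ∧ w.head? = some σ} := by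
    intro σ w₁ h₁ w₂ h₂ ht
    rw [eq_cons_of_head? h₁.2, eq_cons_of_head? h₂.2, ht]
  have hf : ∀ σ : Bool, ({w | w ∈ S ∧ w.head? = some σ}).Finite :=
    fun σ => hfin.subset (fun w hw => hw.1)
  calc S.ncard
      ≤ ({w | w ∈ S ∧ w.head? = some false} ∪ {w | w ∈ S ∧ w.head? = some true}).ncard :=
        Set.ncard_le_ncard hsub ((hf false).union (hf true))
    _ ≤ ({w | w ∈ S ∧ w.head? = some false}).ncard + ({w | w ∈ S ∧ w.head? = some true}).ncard :=
        Set.ncard_union_le _ _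
    _ = _ := by
        rw [Set.ncard_image_of_injOn (hinj false), Set.ncard_image_of_injOn (hinj true)]

lemma head_split' (S : Set (List Bool)) (c : Bool) {k : ℕ} (hS : ∀ w ∈ S, w.length = k + 1) :
    S.ncard ≤ (List.tail '' {w | w ∈ S ∧ w.head? = some c}).ncard
            + (List.tail '' {w | w ∈ S ∧ w.head? = some (!c)}).ncard := by
  cases c
  · simpa using head_split S hS
  · simpa [add_comm] using head_split S hS

lemma sublist_of_cons_of_ne {c d : Bool} {s w : List Bool} (h : (c :: s).Sublist (d :: w))
    (hne : c ≠ d) : (c :: s).Sublist w := by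
  cases h with
  | cons _ h' => exact h'
  | cons_cons => exact absurd rfl hne

lemma sublist_of_concat_of_ne {d e : Bool} {s w : List Bool} (h : (s ++ [d]).Sublist (w ++ [e]))
    (hne : d ≠ e) : (s ++ [d]).Sublist w := by
  rw [← List.reverse_sublist] at h ⊢
  simp only [List.reverse_append, List.reverse_cons, List.reverse_nil, List.nil_append,
    List.singleton_append] at h ⊢
  exact sublist_of_cons_of_ne h hne

lemma sublist_of_concat_concat {d : Bool} {s w : List Bool} (h : (s ++ [d]).Sublist (w ++ [d])) :
    s.Sublist w := by
  rw [← List.reverse_sublist] at h ⊢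
  simp only [List.reverse_append, List.reverse_cons, List.reverse_nil, List.nil_append,
    List.singleton_append] at h
  exact List.cons_sublist_cons.mp h

lemma card_len_le : ∀ k : ℕ, ({w : List Bool | w.length = k}).ncard ≤ 2 ^ k := by
  intro k
  induction k with
  | zero =>
      have hsub : {w : List Bool | w.length = 0} ⊆ {([] : List Bool)} := by
        intro w hw
        simp only [Set.mem_setOf_eq] at hw
        simp [List.length_eq_zero_iff.mp hw]
      calc ({w : List Bool | w.length = 0}).ncard ≤ ({([] : List Bool)} : Set (List Bool)).ncard :=
            Set.ncard_le_ncard hsub (Set.finite_singleton _)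
        _ = 1 := Set.ncard_singleton _
        _ ≤ 2 ^ 0 := by norm_num
  | succ k ih =>
      apply le_trans (head_split _ (fun w hw => hw))
      have htar : ∀ σ : Bool, List.tail '' {w | w ∈ {w : List Bool | w.length = k + 1} ∧ w.head? = some σ}
          ⊆ {w : List Bool | w.length = k} := by
        rintro σ q ⟨w, ⟨hwl, hhead⟩, rfl⟩
        have hwl' : w.length = k + 1 := hwl
        have ht : w.tail.length = w.length - 1 := List.length_tail
        show w.tail.length = k
        omega
      have hb : ∀ σ : Bool, (List.tail '' {w | w ∈ {w : List Bool | w.length = k + 1} ∧ w.head? = some σ}).ncard ≤ 2 ^ k :=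
        fun σ => le_trans (Set.ncard_le_ncard (htar σ) (List.finite_length_eq Bool k)) ih
      calc _ ≤ 2 ^ k + 2 ^ k := add_le_add (hb false) (hb true)
        _ = 2 ^ (k+1) := by ring

lemma ball_bound : ∀ (l : ℕ) (v : List Bool),
    ({w : List Bool | w.length = l ∧ v.Sublist w}).ncard ≤ Bfun l v.length := by
  intro l
  induction l with
  | zero =>
      intro v
      have hsub : {w : List Bool | w.length = 0 ∧ v.Sublist w} ⊆ {([] : List Bool)} := by
        intro w hw
        simp [List.length_eq_zero_iff.mp hw.1]
      calc ({w : List Bool | w.length = 0 ∧ v.Sublist w}).ncard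
          ≤ ({([] : List Bool)} : Set (List Bool)).ncard :=
            Set.ncard_le_ncard hsub (Set.finite_singleton _)
        _ = 1 := Set.ncard_singleton _
        _ ≤ Bfun 0 v.length := Bfun_pos _ _
  | succ l ih =>
      intro v
      by_cases hql : v.length ≤ l
      · cases v with
        | nil =>
            have hsub : {w : List Bool | w.length = l + 1 ∧ ([] : List Bool).Sublist w}
                ⊆ {w : List Bool | w.length = l + 1} := fun w hw => hw.1
            calc ({w : List Bool | w.length = l + 1 ∧ ([] : List Bool).Sublist w}).ncard
                ≤ ({w : List Bool | w.length = l + 1}).ncard :=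
                  Set.ncard_le_ncard hsub (List.finite_length_eq Bool (l+1))
              _ ≤ 2 ^ (l+1) := card_len_le (l+1)
              _ = Bfun (l+1) 0 := by
                  unfold Bfun
                  rw [Nat.sub_zero, Nat.sum_range_choose]
        | cons d v' =>
            set S := {w : List Bool | w.length = l + 1 ∧ (d :: v').Sublist w} with hS
            apply le_trans (head_split' S d (fun w hw => hw.1))
            have h1 : List.tail '' {w | w ∈ S ∧ w.head? = some d}
                ⊆ {q : List Bool | q.length = l ∧ v'.Sublist q} := by
              rintro q ⟨w, ⟨⟨hwl, hwsub⟩, hhead⟩, rfl⟩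
              have hw := eq_cons_of_head? hhead
              have hwl' : w.length = l + 1 := hwl
              have ht : w.tail.length = w.length - 1 := List.length_tail
              constructor
              · show w.tail.length = l
                omega
              · rw [hw] at hwsub
                exact List.cons_sublist_cons.mp hwsub
            have h2 : List.tail '' {w | w ∈ S ∧ w.head? = some (!d)}
                ⊆ {q : List Bool | q.length = l ∧ (d :: v').Sublist q} := by
              rintro q ⟨w, ⟨⟨hwl, hwsub⟩, hhead⟩, rfl⟩
              have hw := eq_cons_of_head? hhead
              have hwl' : w.length = l + 1 := hwl
              have ht : w.tail.length = w.length - 1 := List.length_tail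
              constructor
              · show w.tail.length = l
                omega
              · rw [hw] at hwsub
                exact sublist_of_cons_of_ne hwsub (by simp)
            have fin1 : ({q : List Bool | q.length = l ∧ v'.Sublist q}).Finite :=
              finite_of_len _ (fun q hq => hq.1)
            have fin2 : ({q : List Bool | q.length = l ∧ (d :: v').Sublist q}).Finite :=
              finite_of_len _ (fun q hq => hq.1)
            have b1 := le_trans (Set.ncard_le_ncard h1 fin1) (ih v')
            have b2 := le_trans (Set.ncard_le_ncard h2 fin2) (ih (d :: v'))
            calc _ ≤ Bfun l v'.length + Bfun l (d :: v').length := add_le_add b1 b2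
              _ = Bfun (l+1) (d :: v').length := by
                  have hq1 : 1 ≤ (d :: v').length := by simp
                  have hp := Bfun_pascal (l := l) (q := (d :: v').length) hq1 hql
                  simp only [List.length_cons, Nat.add_sub_cancel] at hp ⊢
                  omega
      · -- l + 1 ≤ v.length : set ⊆ {v}
        push_neg at hql
        have hsub : {w : List Bool | w.length = l + 1 ∧ v.Sublist w} ⊆ {v} := by
          intro w hw
          obtain ⟨hwl, hws⟩ := hw
          have hle := hws.length_le
          have : v = w := hws.eq_of_length (by omega)
          simp [this.symm]
        calc ({w : List Bool | w.length = l + 1 ∧ v.Sublist w}).ncard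
            ≤ ({v} : Set (List Bool)).ncard := Set.ncard_le_ncard hsub (Set.finite_singleton _)
          _ = 1 := Set.ncard_singleton _
          _ ≤ Bfun (l+1) v.length := Bfun_pos _ _

lemma pair_empty {k : ℕ} {u v : List Bool} (hlen : u.length = v.length) (hne : u ≠ v)
    (hk : k ≤ u.length) :
    {w : List Bool | w.length = k ∧ u.Sublist w ∧ v.Sublist w} = ∅ := by
  ext w
  simp only [Set.mem_setOf_eq, Set.mem_empty_iff_false, iff_false, not_and]
  rintro hwl hu hv
  have l1 := hu.length_le
  have h1 : u = w := hu.eq_of_length (by omega)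
  have h2 : v = w := hv.eq_of_length (by have := hv.length_le; omega)
  exact hne (h1.trans h2.symm)

lemma pair_bound : ∀ (l : ℕ) (u v : List Bool), u.length = v.length → u ≠ v →
    ({w : List Bool | w.length = l ∧ u.Sublist w ∧ v.Sublist w}).ncard
      ≤ 2 * Bfun (l - 1) u.length := by
  intro l
  induction l with
  | zero =>
      intro u v hlen hne
      rw [pair_empty hlen hne (Nat.zero_le _)]
      simp
  | succ l ih =>
      intro u v hlen hne
      by_cases hml : u.length ≤ l
      · cases u with
        | nil =>
            exfalso
            apply hne
            rw [List.length_eq_zero_iff.mp hlen.symm]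
        | cons c u' =>
          cases v with
          | nil => simp at hlen
          | cons d v' =>
            set S := {w : List Bool | w.length = l + 1 ∧ (c :: u').Sublist w ∧ (d :: v').Sublist w}
              with hSdef
            by_cases hcd : c = d
            · subst hcd
              apply le_trans (head_split' S c (fun w hw => hw.1))
              have h1 : List.tail '' {w | w ∈ S ∧ w.head? = some c}
                  ⊆ {q : List Bool | q.length = l ∧ u'.Sublist q ∧ v'.Sublist q} := by
                rintro q ⟨w, ⟨⟨hwl, hwu, hwv⟩, hhead⟩, rfl⟩
                have hw := eq_cons_of_head? hhead
                rw [hw] at hwu hwv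
                refine ⟨?_, List.cons_sublist_cons.mp hwu,
                  List.cons_sublist_cons.mp hwv⟩
                have hwl' : w.length = l + 1 := hwl
                have ht : w.tail.length = w.length - 1 := List.length_tail
                show w.tail.length = l
                omega
              have h2 : List.tail '' {w | w ∈ S ∧ w.head? = some (!c)}
                  ⊆ {q : List Bool | q.length = l ∧ (c :: u').Sublist q ∧ (c :: v').Sublist q} := by
                rintro q ⟨w, ⟨⟨hwl, hwu, hwv⟩, hhead⟩, rfl⟩
                have hw := eq_cons_of_head? hhead
                rw [hw] at hwu hwv
                refine ⟨?_, sublist_of_cons_of_ne hwu (by simp),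
                  sublist_of_cons_of_ne hwv (by simp)⟩
                have hwl' : w.length = l + 1 := hwl
                have ht : w.tail.length = w.length - 1 := List.length_tail
                show w.tail.length = l
                omega
              have fin1 : ({q : List Bool | q.length = l ∧ u'.Sublist q ∧ v'.Sublist q}).Finite :=
                finite_of_len _ (fun q hq => hq.1)
              have fin2 : ({q : List Bool | q.length = l ∧ (c :: u').Sublist q ∧ (c :: v').Sublist q}).Finite :=
                finite_of_len _ (fun q hq => hq.1)
              have hne' : u' ≠ v' := by
                intro h; exact hne (by rw [h])
              have hlen' : u'.length = v'.length := by
                simpa using hlen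
              have b1 : (List.tail '' {w | w ∈ S ∧ w.head? = some c}).ncard
                  ≤ 2 * Bfun (l - 1) u'.length :=
                le_trans (Set.ncard_le_ncard h1 fin1) (ih u' v' hlen' hne')
              by_cases hll : (c :: u').length ≤ l - 1
              · -- genuine Pascal case
                have b2 : (List.tail '' {w | w ∈ S ∧ w.head? = some (!c)}).ncard
                    ≤ 2 * Bfun (l - 1) (c :: u').length :=
                  le_trans (Set.ncard_le_ncard h2 fin2) (ih (c :: u') (c :: v') hlen hne)
                have hl1 : 1 ≤ l := by simp at hll; omega
                have hpas : Bfun l (c :: u').length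
                    = Bfun (l - 1) ((c :: u').length - 1) + Bfun (l - 1) (c :: u').length := by
                  have := Bfun_pascal (l := l - 1) (q := (c :: u').length) (by simp) hll
                  have hrw : l - 1 + 1 = l := by omega
                  rw [hrw] at this
                  exact this
                have hu'l : (c :: u').length - 1 = u'.length := by simp
                calc _ ≤ 2 * Bfun (l - 1) u'.length + 2 * Bfun (l - 1) (c :: u').length :=
                      add_le_add b1 b2
                  _ = 2 * Bfun l (c :: u').length := by rw [hpas, hu'l]; ring
                  _ = 2 * Bfun (l + 1 - 1) (c :: u').length := by norm_num
              · -- here l = (c::u').length, the second target set is empty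
                have hleq : l = (c :: u').length := by
                  simp only [List.length_cons] at hml hll ⊢
                  omega
                have hempty : {q : List Bool | q.length = l ∧ (c :: u').Sublist q ∧ (c :: v').Sublist q} = ∅ :=
                  pair_empty hlen hne (by omega)
                have b2 : (List.tail '' {w | w ∈ S ∧ w.head? = some (!c)}).ncard ≤ 0 := by
                  have := Set.ncard_le_ncard (hempty ▸ h2) (Set.finite_empty)
                  simpa using this
                have e1 : Bfun (l - 1) u'.length = 1 := by
                  have : l - 1 = u'.length := by simp at hleq ⊢; omega
                  rw [this, Bfun_self]
                have e2 : Bfun (l + 1 - 1) (c :: u').length = 1 := by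
                  have : l + 1 - 1 = (c :: u').length := by omega
                  rw [this, Bfun_self]
                calc _ ≤ 2 * Bfun (l - 1) u'.length + 0 := add_le_add b1 b2
                  _ = 2 := by rw [e1]
                  _ ≤ 2 * Bfun (l + 1 - 1) (c :: u').length := by rw [e2]
            · -- c ≠ d : bound each branch by a single ball
              apply le_trans (head_split' S c (fun w hw => hw.1))
              have h1 : List.tail '' {w | w ∈ S ∧ w.head? = some c}
                  ⊆ {q : List Bool | q.length = l ∧ (d :: v').Sublist q} := by
                rintro q ⟨w, ⟨⟨hwl, hwu, hwv⟩, hhead⟩, rfl⟩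
                have hw := eq_cons_of_head? hhead
                rw [hw] at hwv
                refine ⟨?_, sublist_of_cons_of_ne hwv (fun h => hcd h.symm)⟩
                have hwl' : w.length = l + 1 := hwl
                have ht : w.tail.length = w.length - 1 := List.length_tail
                show w.tail.length = l
                omega
              have h2 : List.tail '' {w | w ∈ S ∧ w.head? = some (!c)}
                  ⊆ {q : List Bool | q.length = l ∧ (c :: u').Sublist q} := by
                rintro q ⟨w, ⟨⟨hwl, hwu, hwv⟩, hhead⟩, rfl⟩
                have hw := eq_cons_of_head? hhead
                rw [hw] at hwu
                refine ⟨?_, sublist_of_cons_of_ne hwu (by simp)⟩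
                have hwl' : w.length = l + 1 := hwl
                have ht : w.tail.length = w.length - 1 := List.length_tail
                show w.tail.length = l
                omega
              have fin1 : ({q : List Bool | q.length = l ∧ (d :: v').Sublist q}).Finite :=
                finite_of_len _ (fun q hq => hq.1)
              have fin2 : ({q : List Bool | q.length = l ∧ (c :: u').Sublist q}).Finite :=
                finite_of_len _ (fun q hq => hq.1)
              have b1 : (List.tail '' {w | w ∈ S ∧ w.head? = some c}).ncard
                  ≤ Bfun l (c :: u').length := by
                refine le_trans (Set.ncard_le_ncard h1 fin1) ?_
                have := ball_bound l (d :: v')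
                rwa [← hlen] at this
              have b2 : (List.tail '' {w | w ∈ S ∧ w.head? = some (!c)}).ncard
                  ≤ Bfun l (c :: u').length :=
                le_trans (Set.ncard_le_ncard h2 fin2) (ball_bound l (c :: u'))
              calc _ ≤ Bfun l (c :: u').length + Bfun l (c :: u').length := add_le_add b1 b2
                _ = 2 * Bfun (l + 1 - 1) (c :: u').length := by
                    norm_num
                    ring
      · -- l + 1 ≤ u.length : set empty
        push_neg at hml
        rw [pair_empty hlen hne (by omega)]
        simp

lemma alt_sum (M' : ℕ) : ∀ s' : ℕ,
    ∑ i ∈ Finset.range (s'+1), (-1 : ℤ)^(s'+1-i) * ((M'+1).choose i : ℤ)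
      = -((M'.choose s' : ℕ) : ℤ) := by
  intro s'
  induction s' with
  | zero => simp
  | succ k ih =>
      rw [Finset.sum_range_succ]
      have h1 : ∀ i ∈ Finset.range (k+1),
          (-1:ℤ)^(k+1+1-i) * ((M'+1).choose i : ℤ)
            = (-1) * ((-1:ℤ)^(k+1-i) * ((M'+1).choose i : ℤ)) := by
        intro i hi
        simp only [Finset.mem_range] at hi
        have he : k+1+1-i = (k+1-i)+1 := by omega
        rw [he, pow_succ]
        ring
      rw [Finset.sum_congr rfl h1, ← Finset.mul_sum, ih]
      have h2 : k+1+1-(k+1) = 1 := by omega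
      rw [h2]
      push_cast [Nat.choose_succ_succ']
      ring

lemma main_identity (M' s' : ℕ) :
    ∑ i ∈ Finset.range (s'+1), ((M'+1).choose i : ℤ) * (1 - (-1 : ℤ)^(s'+1-i))
      = 2 * ∑ i ∈ Finset.range (s'+1), ((M'.choose i : ℕ) : ℤ) := by
  have e1 : ∑ i ∈ Finset.range (s'+1), ((M'+1).choose i : ℤ) * (1 - (-1 : ℤ)^(s'+1-i))
      = (∑ i ∈ Finset.range (s'+1), ((M'+1).choose i : ℤ))
        - ∑ i ∈ Finset.range (s'+1), (-1:ℤ)^(s'+1-i) * ((M'+1).choose i : ℤ) := by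
    rw [← Finset.sum_sub_distrib]
    apply Finset.sum_congr rfl
    intro i _
    ring
  rw [e1, alt_sum]
  have e2 := sum_choose_pascal M' s'
  have e2' : (∑ i ∈ Finset.range (s'+1), ((M'+1).choose i : ℤ))
      = ∑ i ∈ Finset.range (s'+1), ((M'.choose i : ℕ) : ℤ)
        + ∑ i ∈ Finset.range s', ((M'.choose i : ℕ) : ℤ) := by
    exact_mod_cast congrArg (Nat.cast : ℕ → ℤ) e2
  rw [e2', Finset.sum_range_succ]
  ring

end Stmt19Aux

open Stmt19Aux in
theorem stmt19 (n : ℕ) (hn : 3 ≤ n) (a b : Bool) (v : List Bool)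
    (hv : v.length = n - 3) (x y : List Bool)
    (hx : x = [a, !a] ++ v ++ [b]) (hy : y = [!a] ++ v ++ [b, !b])
    (z : List Bool) (hz : insBall 1 x ∩ insBall 1 y = {z}) :
    ∀ t, 2 ≤ t →
      ((insBall t x ∩ insBall t y).ncard : ℤ) ≤
        ((insBall (t - 1) z).ncard : ℤ) +
        ∑ i ∈ Finset.range (t - 1),
          ((n - 1 + (t - 1)).choose i : ℤ) * (1 - (-1 : ℤ)^((t - 1) - i)) := by
  intro t ht
  obtain ⟨s', rfl⟩ : ∃ s', t = s' + 2 := ⟨t - 2, by omega⟩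
  set s : ℕ := s' + 1 with hsdef
  have hxl : x.length = n := by rw [hx]; simp; omega
  have hyl : y.length = n := by rw [hy]; simp; omega
  -- z = a :: y
  have hxz : x.Sublist (a :: y) := by
    rw [hx, hy]
    simp only [List.cons_append, List.nil_append]
    refine List.Sublist.cons₂ a (List.Sublist.cons₂ (!a) ?_)
    have h1 : v ++ [b, !b] = (v ++ [b]) ++ [!b] := by simp
    rw [h1]
    exact List.sublist_append_left _ _
  have hmemz : (a :: y) ∈ insBall 1 x ∩ insBall 1 y := by
    refine ⟨⟨?_, hxz⟩, ⟨?_, List.sublist_cons_self a y⟩⟩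
    · simp [hxl, hyl]
    · simp
  have hz' : z = a :: y := by
    rw [hz] at hmemz
    exact hmemz.symm
  -- the two shifted words
  obtain ⟨x0, hx0⟩ : ∃ x0 : List Bool, x0 = [a, !a] ++ v := ⟨_, rfl⟩
  obtain ⟨yt, hyt⟩ : ∃ yt : List Bool, yt = v ++ [b, !b] := ⟨_, rfl⟩
  have hx0l : x0.length = n - 1 := by rw [hx0]; simp; omega
  have hytl : yt.length = n - 1 := by rw [hyt]; simp; omega
  have hxx0 : x = x0 ++ [b] := by simp [hx, hx0]
  have hyyt : y = (!a) :: yt := by simp [hy, hyt]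
  have hzx2 : a :: y = x ++ [!b] := by simp [hx, hy, hx0]
  -- distinctness of x0 and yt (uses uniqueness of z)
  have hx0yt : x0 ≠ yt := by
    intro heq
    have hxsub : x.Sublist (y ++ [b]) := by
      rw [hxx0, heq, hyyt]
      simp only [List.cons_append]
      exact (List.Sublist.refl (yt ++ [b])).cons (!a)
    have hmem2 : (y ++ [b]) ∈ insBall 1 x ∩ insBall 1 y := by
      refine ⟨⟨?_, hxsub⟩, ⟨?_, List.sublist_append_left _ _⟩⟩
      · simp [hxl, hyl]
      · simp
    rw [hz] at hmem2
    have : y ++ [b] = a :: y := hmem2.trans hz'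
    rw [hyyt] at this
    simp at this
  -- the bad set
  set Bad := {w : List Bool | w.length = n + s + 1 ∧ x.Sublist w ∧ y.Sublist w
      ∧ ¬ (a :: y).Sublist w} with hBad
  set Q := {q : List Bool | q.length = n + s - 1 ∧ x0.Sublist q ∧ yt.Sublist q} with hQ
  -- step 1 : split off the supersequences of z
  have hWsub : insBall (s+1) x ∩ insBall (s+1) y ⊆ insBall s (a :: y) ∪ Bad := by
    rintro w ⟨⟨hl1, hsx⟩, hl2, hsy⟩
    by_cases hzw : (a :: y).Sublist w
    · left
      refine ⟨?_, hzw⟩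
      simp only [List.length_cons, hyl]
      omega
    · right
      exact ⟨by omega, hsx, hsy, hzw⟩
  have hfinI : (insBall s (a :: y)).Finite :=
    finite_of_len _ (fun w hw => hw.1)
  have hfinBad : Bad.Finite := finite_of_len _ (fun w hw => hw.1)
  have hstep1 : (insBall (s+1) x ∩ insBall (s+1) y).ncard
      ≤ (insBall s (a :: y)).ncard + Bad.ncard :=
    le_trans (Set.ncard_le_ncard hWsub (hfinI.union hfinBad)) (Set.ncard_union_le _ _)
  -- step 2 : inject Bad into Q
  have key : ∀ w ∈ Bad, w = (!a) :: (w.tail.dropLast ++ [b]) ∧ w.tail.dropLast ∈ Q := by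
    intro w hw
    obtain ⟨hwl, hwx, hwy, hwz⟩ := hw
    obtain ⟨c, u, rfl⟩ : ∃ c u, w = c :: u := by
      cases w with
      | nil => simp at hwl
      | cons c u => exact ⟨c, u, rfl⟩
    have hca : c = !a := by
      by_contra hc
      have hc' : c = a := by cases a <;> cases c <;> simp_all
      subst c
      apply hwz
      have hyu : y.Sublist u := by
        rw [hyyt] at hwy
        rw [hyyt]
        exact sublist_of_cons_of_ne hwy (by simp)
      exact hyu.cons₂ a
    subst hca
    have hxu : x.Sublist u := by
      rw [hx] at hwx
      rw [hx]
      simp only [List.cons_append, List.nil_append] at hwx ⊢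
      exact sublist_of_cons_of_ne hwx (by simp)
    have hytu : yt.Sublist u := by
      rw [hyyt] at hwy
      exact List.cons_sublist_cons.mp hwy
    have hzu : ¬ (a :: y).Sublist u := fun h => hwz (h.cons (!a))
    obtain (hnil | ⟨q, d, hqd⟩) := u.eq_nil_or_concat
    · exfalso
      rw [hnil] at hxu
      have := hxu.length_le
      simp [hxl] at this
      omega
    rw [List.concat_eq_append] at hqd
    subst hqd
    have hdb : d = b := by
      by_contra hd
      have hd' : d = !b := by cases b <;> cases d <;> simp_all
      subst d
      apply hzu
      have hxq : x.Sublist q := by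
        rw [hxx0] at hxu
        have h1 := sublist_of_concat_of_ne hxu (by simp)
        rwa [hxx0]
      rw [hzx2]
      exact List.Sublist.append hxq (List.Sublist.refl _)
    subst d
    have hx0q : x0.Sublist q := by
      rw [hxx0] at hxu
      exact sublist_of_concat_concat hxu
    have hytq : yt.Sublist q := by
      have h1 : ((v ++ [b]) ++ [!b]).Sublist (q ++ [b]) := by
        rw [hyt] at hytu
        have hyt2 : v ++ [b, !b] = (v ++ [b]) ++ [!b] := by simp
        rwa [hyt2] at hytu
      have h2 := sublist_of_concat_of_ne h1 (by simp)
      rw [hyt]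
      have hyt2 : v ++ [b, !b] = (v ++ [b]) ++ [!b] := by simp
      rw [hyt2]
      exact h2
    have hql : q.length = n + s - 1 := by
      simp at hwl
      omega
    constructor
    · simp only [List.tail_cons, List.dropLast_concat]
    · simp only [List.tail_cons, List.dropLast_concat]
      exact ⟨hql, hx0q, hytq⟩
  have hinj : Set.InjOn (fun w => w.tail.dropLast) Bad := by
    intro w1 h1 w2 h2 he
    have e1 := (key w1 h1).1
    have e2 := (key w2 h2).1
    have he' : w1.tail.dropLast = w2.tail.dropLast := he
    rw [e1, e2, he']
  have hfinQ : Q.Finite := finite_of_len _ (fun q hq => hq.1)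
  have hstep2 : Bad.ncard ≤ Q.ncard :=
    Set.ncard_le_ncard_of_injOn _ (fun w hw => (key w hw).2) hinj hfinQ
  -- step 3 : pair bound
  have hstep3 : Q.ncard ≤ 2 * Bfun (n + s - 2) (n - 1) := by
    have := pair_bound (n + s - 1) x0 yt (by rw [hx0l, hytl]) hx0yt
    rw [hx0l] at this
    have he : n + s - 1 - 1 = n + s - 2 := by omega
    rwa [he] at this
  -- assemble, in ℕ
  have htotal : (insBall (s+1) x ∩ insBall (s+1) y).ncard
      ≤ (insBall s (a :: y)).ncard + 2 * Bfun (n + s - 2) (n - 1) := by omega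
  -- now cast to ℤ and use the identity
  have hts : s' + 2 - 1 = s' + 1 := by omega
  rw [hz', hts]
  have hBfun : (Bfun (n + s - 2) (n - 1) : ℤ)
      = ∑ i ∈ Finset.range (s' + 1), (((n - 1 + s').choose i : ℕ) : ℤ) := by
    unfold Bfun
    push_cast
    have h1 : n + s - 2 - (n - 1) + 1 = s' + 1 := by omega
    have h2 : n + s - 2 = n - 1 + s' := by omega
    rw [h1, h2]
  have hid : ∑ i ∈ Finset.range (s' + 1),
        ((n - 1 + (s' + 1)).choose i : ℤ) * (1 - (-1 : ℤ)^((s' + 1) - i))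
      = 2 * (Bfun (n + s - 2) (n - 1) : ℤ) := by
    rw [hBfun]
    have h3 : n - 1 + (s' + 1) = (n - 1 + s') + 1 := by omega
    rw [h3]
    exact main_identity (n - 1 + s') s'
  rw [hid]
  have hcast : ((insBall (s+1) x ∩ insBall (s+1) y).ncard : ℤ)
      ≤ ((insBall s (a :: y)).ncard : ℤ) + 2 * (Bfun (n + s - 2) (n - 1) : ℤ) := by
    exact_mod_cast htotal
  exact hcast
end
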